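/- arXiv:1911.02343 — 2 statements merged into one kernel-verified Lean document; each statement's English description precedes it below -/
import Mathlib

section
/- For every odd integer Δ ≥ 3, there exists a cactus graph G with maximum degree Δ such that χ'_s(G) = ⌊3Δ/2⌋ + 1. -/
open SimpleGraph Finset

/-- A star edge coloring: a proper edge coloring with no bi-colored path or
cycle on four edges. -/
def IsStarEdgeColoring {V : Type*} (G : SimpleGraph V) (c : Sym2 V → ℕ) : Prop :=
  (∀ ⦃u v w : V⦄, G.Adj u v → G.Adj u w → v ≠ w → c s(u, v) ≠ c s(u, w)) ∧
  (∀ v₀ v₁ v₂ v₃ v₄ : V, G.Adj v₀ v₁ → G.Adj v₁ v₂ → G.Adj v₂ v₃ → G.Adj v₃ v₄ →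
    v₀ ≠ v₁ → v₀ ≠ v₂ → v₀ ≠ v₃ → v₁ ≠ v₂ → v₁ ≠ v₃ → v₂ ≠ v₃ →
    v₄ ≠ v₁ → v₄ ≠ v₂ → v₄ ≠ v₃ →
    ¬(c s(v₀, v₁) = c s(v₂, v₃) ∧ c s(v₁, v₂) = c s(v₃, v₄)))

/-- `G` has a star edge coloring using colors `0, …, k-1`. -/
def StarColorable {V : Type*} (G : SimpleGraph V) (k : ℕ) : Prop :=
  ∃ c : Sym2 V → ℕ, (∀ ⦃u v : V⦄, G.Adj u v → c s(u, v) < k) ∧ IsStarEdgeColoring G c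

/-- The star chromatic index of `G`. -/
noncomputable def starChromaticIndex {V : Type*} (G : SimpleGraph V) : ℕ :=
  sInf {k | StarColorable G k}

/-- A cactus: every edge belongs to at most one cycle, i.e. any two cycles
through a common edge have the same edge set. -/
def IsCactus {V : Type*} (G : SimpleGraph V) : Prop :=
  ∀ ⦃u w : V⦄ (p : G.Walk u u) (q : G.Walk w w), p.IsCycle → q.IsCycle →
    ∀ e : Sym2 V, e ∈ p.edges → e ∈ q.edges →
      {e' | e' ∈ p.edges} = {e' | e' ∈ q.edges}


namespace Extremal

inductive Vtx (s : ℕ) where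
  | T (a : Fin 3)
  | M (a : Fin 3) (i : Fin (2*s+1))
  | L (a : Fin 3) (i : Fin (2*s+1)) (j : Fin (2*s+2))
  deriving DecidableEq, Fintype

namespace Vtx

variable {s : ℕ}

def adj : Vtx s → Vtx s → Prop
  | .T a, .T b => a ≠ b
  | .T a, .M b _ => a = b
  | .M a _, .T b => a = b
  | .M a i, .L b j _ => a = b ∧ i = j
  | .L a i _, .M b j => a = b ∧ i = j
  | _, _ => False

instance : DecidableRel (adj (s := s)) := by
  intro u v
  cases u <;> cases v <;> unfold adj <;> infer_instance

lemma adj_symm : ∀ u v : Vtx s, adj u v → adj v u := by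
  intro u v h
  cases u <;> cases v <;> unfold adj at * <;> simp_all <;> tauto

lemma adj_irrefl : ∀ u : Vtx s, ¬ adj u u := by
  intro u h
  cases u <;> unfold adj at h <;> simp_all

end Vtx

def G (s : ℕ) : SimpleGraph (Vtx s) where
  Adj := Vtx.adj
  symm := ⟨Vtx.adj_symm⟩
  loopless := ⟨Vtx.adj_irrefl⟩

instance {s : ℕ} : DecidableRel (G s).Adj := by
  unfold G; infer_instance

variable {s : ℕ}

@[simp] lemma adj_TT {a b : Fin 3} : (G s).Adj (.T a) (.T b) ↔ a ≠ b := Iff.rfl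
@[simp] lemma adj_TM {a b : Fin 3} {i : Fin (2*s+1)} : (G s).Adj (.T a) (.M b i) ↔ a = b := Iff.rfl
@[simp] lemma adj_MT {a b : Fin 3} {i : Fin (2*s+1)} : (G s).Adj (.M a i) (.T b) ↔ a = b := Iff.rfl
@[simp] lemma adj_ML {a b : Fin 3} {i j : Fin (2*s+1)} {k : Fin (2*s+2)} :
    (G s).Adj (.M a i) (.L b j k) ↔ a = b ∧ i = j := Iff.rfl
@[simp] lemma adj_LM {a b : Fin 3} {i j : Fin (2*s+1)} {k : Fin (2*s+2)} :
    (G s).Adj (.L a i k) (.M b j) ↔ a = b ∧ i = j := Iff.rfl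
@[simp] lemma adj_TL {a b : Fin 3} {j : Fin (2*s+1)} {k : Fin (2*s+2)} :
    ¬ (G s).Adj (.T a) (.L b j k) := fun h => h
@[simp] lemma adj_LT {a b : Fin 3} {j : Fin (2*s+1)} {k : Fin (2*s+2)} :
    ¬ (G s).Adj (.L b j k) (.T a) := fun h => h
@[simp] lemma adj_MM {a b : Fin 3} {i j : Fin (2*s+1)} :
    ¬ (G s).Adj (.M a i) (.M b j) := fun h => h
@[simp] lemma adj_LL {a b : Fin 3} {i j : Fin (2*s+1)} {k l : Fin (2*s+2)} :
    ¬ (G s).Adj (.L a i k) (.L b j l) := fun h => h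

lemma nbhd_T (a : Fin 3) : (G s).neighborFinset (.T a) =
    ((univ.erase a).image (fun b => Vtx.T b)) ∪ (univ.image fun i => Vtx.M a i) := by
  ext v
  cases v <;> simp [mem_neighborFinset, eq_comm] <;> tauto

lemma nbhd_M (a : Fin 3) (i : Fin (2*s+1)) : (G s).neighborFinset (.M a i) =
    insert (Vtx.T a) (univ.image fun j => Vtx.L a i j) := by
  ext v
  cases v <;> simp [mem_neighborFinset, eq_comm] <;> tauto

lemma nbhd_L (a : Fin 3) (i : Fin (2*s+1)) (j : Fin (2*s+2)) :
    (G s).neighborFinset (.L a i j) = {Vtx.M a i} := by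
  ext v
  cases v <;> simp [mem_neighborFinset, eq_comm] <;> tauto

lemma degree_T (a : Fin 3) : (G s).degree (.T a) = 2*s+3 := by
  rw [← card_neighborFinset_eq_degree, nbhd_T, card_union_of_disjoint, card_image_of_injective,
    card_image_of_injective]
  · simp; omega
  · intro x y h; cases h; rfl
  · intro x y h; cases h; rfl
  · simp [Finset.disjoint_left]

lemma degree_M (a : Fin 3) (i : Fin (2*s+1)) : (G s).degree (.M a i) = 2*s+3 := by
  rw [← card_neighborFinset_eq_degree, nbhd_M, card_insert_of_notMem, card_image_of_injective]
  · simp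
  · intro x y h; cases h; rfl
  · simp

lemma degree_L (a : Fin 3) (i : Fin (2*s+1)) (j : Fin (2*s+2)) :
    (G s).degree (.L a i j) = 1 := by
  rw [← card_neighborFinset_eq_degree, nbhd_L]; simp

lemma degree_le (v : Vtx s) : (G s).degree v ≤ 2*s+3 := by
  cases v <;> simp [degree_T, degree_M, degree_L]



section CycleAux

variable {V : Type*} {G : SimpleGraph V}

lemma exists_adj_end {a b : V} (q : G.Walk a b) (hp : q.IsPath) :
    1 ≤ q.length → ∃ z ∈ q.support, G.Adj z b ∧ (2 ≤ q.length → z ≠ a) := by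
  induction q with
  | nil => simp
  | @cons u c b' h q ih =>
    intro _
    cases q with
    | nil => exact ⟨u, by simp, h, by simp⟩
    | @cons c d b'' h2 q2 =>
      have hp' : (Walk.cons h2 q2).IsPath := hp.of_cons
      obtain ⟨z, hz, hzb, _⟩ := ih hp' (by simp)
      have hu : u ∉ (Walk.cons h2 q2).support := ((Walk.cons_isPath_iff _ _).mp hp).2
      exact ⟨z, by simp [Walk.support_cons]; right; simpa using hz, hzb,
        fun _ hza => hu (hza ▸ hz)⟩

lemma cycle_two_nbrs {v : V} (p : G.Walk v v) (hc : p.IsCycle) :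
    ∃ w z, w ≠ z ∧ G.Adj v w ∧ G.Adj v z ∧ w ∈ p.support ∧ z ∈ p.support := by
  cases p with
  | nil => exact absurd hc Walk.IsCycle.not_of_nil
  | @cons u c _ h q =>
    have hq : q.IsPath := ((Walk.cons_isCycle_iff _ _).mp hc).1
    have hlen : 3 ≤ (Walk.cons h q).length := hc.three_le_length
    simp only [Walk.length_cons] at hlen
    obtain ⟨z, hzs, hzb, hzne⟩ := exists_adj_end q hq (by omega)
    refine ⟨c, z, fun hcz => (hzne (by omega)) hcz.symm, h, hzb.symm, by simp,
      by simp [Walk.support_cons, hzs]⟩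

lemma mem_support_closed_iff {v x : V} (p : G.Walk v v) (hp : ¬ p.Nil) :
    x ∈ p.support ↔ x ∈ p.support.tail := by
  cases p with
  | nil => simp at hp
  | cons h q =>
    simp only [Walk.support_cons, List.tail_cons, List.mem_cons]
    exact ⟨fun hx => hx.elim (fun hxv => hxv ▸ q.end_mem_support) id, Or.inr⟩

lemma mem_cycle_two_nbrs [DecidableEq V] {x : V} (p : G.Walk x x) (hc : p.IsCycle)
    {u : V} (hu : u ∈ p.support) :
    ∃ w z, w ≠ z ∧ G.Adj u w ∧ G.Adj u z ∧ w ∈ p.support ∧ z ∈ p.support := by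
  obtain ⟨w, z, hwz, hw, hz, hws, hzs⟩ := cycle_two_nbrs (p.rotate u hu) (hc.rotate hu)
  have hperm := Walk.support_rotate p u hu
  have hnn := hc.not_nil
  have hnn' := (hc.rotate hu).not_nil
  rw [mem_support_closed_iff _ hnn', hperm.mem_iff, ← mem_support_closed_iff _ hnn] at hws hzs
  exact ⟨w, z, hwz, hw, hz, hws, hzs⟩

end CycleAux

end Extremal

namespace Extremal

variable {s : ℕ}

def triSet (s : ℕ) : Set (Sym2 (Vtx s)) :=
  {s(.T 0, .T 1), s(.T 0, .T 2), s(.T 1, .T 2)}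

def triFinset (s : ℕ) : Finset (Sym2 (Vtx s)) :=
  {s(.T 0, .T 1), s(.T 0, .T 2), s(.T 1, .T 2)}

lemma cycle_support_T {x : Vtx s} (p : (G s).Walk x x) (hc : p.IsCycle) :
    ∀ u ∈ p.support, ∃ a, u = Vtx.T a := by
  have hL : ∀ a i j, Vtx.L a i j ∉ p.support := by
    intro a i j hmem
    obtain ⟨w, z, hwz, hw, hz, _, _⟩ := mem_cycle_two_nbrs p hc hmem
    have hwM : w = Vtx.M a i := by
      cases w with
      | T b => exact absurd hw (by simp)
      | M b k => obtain ⟨rfl, rfl⟩ := (adj_LM).mp hw; rfl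
      | L b k l => exact absurd hw (by simp)
    have hzM : z = Vtx.M a i := by
      cases z with
      | T b => exact absurd hz (by simp)
      | M b k => obtain ⟨rfl, rfl⟩ := (adj_LM).mp hz; rfl
      | L b k l => exact absurd hz (by simp)
    exact hwz (hwM.trans hzM.symm)
  intro u hu
  cases u with
  | T a => exact ⟨a, rfl⟩
  | M a i =>
    obtain ⟨w, z, hwz, hw, hz, hws, hzs⟩ := mem_cycle_two_nbrs p hc hu
    have hwT : w = Vtx.T a := by
      cases w with
      | T b => rw [(adj_MT).mp hw]
      | M b k => exact absurd hw (by simp)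
      | L b k l =>
        obtain ⟨rfl, rfl⟩ := (adj_ML).mp hw
        exact absurd hws (hL _ _ _)
    have hzT : z = Vtx.T a := by
      cases z with
      | T b => rw [(adj_MT).mp hz]
      | M b k => exact absurd hz (by simp)
      | L b k l =>
        obtain ⟨rfl, rfl⟩ := (adj_ML).mp hz
        exact absurd hzs (hL _ _ _)
    exact absurd (hwT.trans hzT.symm) hwz
  | L a i j => exact absurd hu (hL a i j)

lemma cycle_edges_subset {x : Vtx s} (p : (G s).Walk x x) (hc : p.IsCycle) :
    ∀ e ∈ p.edges, e ∈ triFinset s := by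
  intro e he
  induction e with
  | h u v =>
    have hu := p.fst_mem_support_of_mem_edges he
    have hv := p.snd_mem_support_of_mem_edges he
    obtain ⟨a, rfl⟩ := cycle_support_T p hc u hu
    obtain ⟨b, rfl⟩ := cycle_support_T p hc v hv
    have hadj : (G s).Adj (.T a) (.T b) := p.adj_of_mem_edges he
    have hab : a ≠ b := hadj
    simp only [triFinset, Finset.mem_insert, Finset.mem_singleton, Sym2.eq, Sym2.rel_iff',
      Prod.mk.injEq, Prod.swap_prod_mk, Vtx.T.injEq]
    fin_cases a <;> fin_cases b <;> simp_all <;> tauto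

lemma cycle_edges_eq {x : Vtx s} (p : (G s).Walk x x) (hc : p.IsCycle) :
    {e | e ∈ p.edges} = triSet s := by
  classical
  have hsub : p.edges.toFinset ⊆ triFinset s := by
    intro e he
    exact cycle_edges_subset p hc e (List.mem_toFinset.mp he)
  have hnd : p.edges.Nodup := hc.edges_nodup
  have hcard : 3 ≤ p.edges.toFinset.card := by
    rw [List.toFinset_card_of_nodup hnd, p.length_edges]
    exact hc.three_le_length
  have htri : (triFinset s).card ≤ 3 := by
    apply le_trans (Finset.card_insert_le _ _)
    simp [triFinset]
  have heq : p.edges.toFinset = triFinset s :=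
    Finset.eq_of_subset_of_card_le hsub (le_trans htri hcard)
  ext e
  constructor
  · intro he
    have : e ∈ triFinset s := heq ▸ List.mem_toFinset.mpr he
    simpa [triSet, triFinset] using this
  · intro he
    have : e ∈ triFinset s := by simpa [triSet, triFinset] using he
    exact List.mem_toFinset.mp (heq ▸ this)

end Extremal

namespace Extremal

variable {s : ℕ}

def tri (a b : Fin 3) : ℕ := a.val + b.val - 1

def gcol (s : ℕ) (a : Fin 3) (i : Fin (2*s+1)) (j : Fin (2*s+2)) : ℕ :=
  if j.val = 0 then 2 - a.val
  else if j.val ≤ s+1 then 2*s+3 + j.val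
  else 3 + ((i.val + j.val - (s+1)) % (2*s+1))

lemma tri_lt {a b : Fin 3} (h : a ≠ b) : tri a b < 3 := by
  fin_cases a <;> fin_cases b <;> simp_all [tri]

lemma tri_symm (a b : Fin 3) : tri a b = tri b a := by
  simp [tri, Nat.add_comm]

lemma tri_inj {a b b' : Fin 3} (h1 : a ≠ b) (h2 : a ≠ b') (h3 : b ≠ b') :
    tri a b ≠ tri a b' := by
  fin_cases a <;> fin_cases b <;> fin_cases b' <;> simp_all [tri]

lemma gcol_lt (a : Fin 3) (i : Fin (2*s+1)) (j : Fin (2*s+2)) :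
    gcol s a i j < 3*s+5 := by
  have hj := j.isLt
  have hm : (i.val + j.val - (s+1)) % (2*s+1) < 2*s+1 := Nat.mod_lt _ (by omega)
  unfold gcol
  split <;> [omega; skip]
  split <;> omega

lemma gcol_branch3 (a : Fin 3) (i : Fin (2*s+1)) (j : Fin (2*s+2)) (hj : s+2 ≤ j.val) :
    gcol s a i j = 3 + ((i.val + j.val - (s+1)) % (2*s+1)) := by
  unfold gcol
  split <;> [omega; skip]
  split <;> [omega; rfl]

-- key modular facts
lemma mod_add_cancel {n x d : ℕ} (h : (x + d) % n = x % n) : d % n = 0 := by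
  have h1 : x + d ≡ x + 0 [MOD n] := by simpa [Nat.ModEq] using h
  have h2 := Nat.ModEq.add_left_cancel' x h1
  simpa [Nat.ModEq] using h2

lemma mod_shift_ne {n i d : ℕ} (hi : i < n) (hd1 : 1 ≤ d) (hdn : d < n) :
    (i + d) % n ≠ i := by
  intro h
  have h1 : (i + d) % n = i % n := by rw [h, Nat.mod_eq_of_lt hi]
  have h2 := mod_add_cancel h1
  have h3 := Nat.dvd_of_mod_eq_zero h2
  have := Nat.le_of_dvd (by omega) h3
  omega

lemma gcol_ne_f (a : Fin 3) (i : Fin (2*s+1)) (j : Fin (2*s+2)) :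
    gcol s a i j ≠ 3 + i.val := by
  have hj := j.isLt
  unfold gcol
  split
  · have := i.isLt; omega
  split
  · have := i.isLt; omega
  · intro h
    have h2 : (i.val + j.val - (s+1)) % (2*s+1) = i.val := by omega
    have h3 : i.val + j.val - (s+1) = i.val + (j.val - (s+1)) := by omega
    rw [h3] at h2
    exact mod_shift_ne i.isLt (by omega) (by omega) h2

lemma gcol_inj (a : Fin 3) (i : Fin (2*s+1)) {j j' : Fin (2*s+2)} (h : j ≠ j') :
    gcol s a i j ≠ gcol s a i j' := by
  have hj := j.isLt
  have hj' := j'.isLt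
  have hvv : j.val ≠ j'.val := fun hv => h (Fin.ext hv)
  have ha := a.isLt
  have hm1 : (i.val + j.val - (s+1)) % (2*s+1) < 2*s+1 := Nat.mod_lt _ (by omega)
  have hm2 : (i.val + j'.val - (s+1)) % (2*s+1) < 2*s+1 := Nat.mod_lt _ (by omega)
  have key : ∀ jv jv' : ℕ, s+2 ≤ jv → s+2 ≤ jv' → jv < jv' → jv' < 2*s+2 →
      (i.val + jv - (s+1)) % (2*s+1) ≠ (i.val + jv' - (s+1)) % (2*s+1) := by
    intro jv jv' hv hv' hlt hub heq
    have h5 : i.val + jv' - (s+1) = (i.val + jv - (s+1)) + (jv' - jv) := by omega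
    rw [h5] at heq
    have h6 := mod_add_cancel heq.symm
    have h7 := Nat.dvd_of_mod_eq_zero h6
    have := Nat.le_of_dvd (by omega) h7
    omega
  unfold gcol
  split <;> split <;> try omega
  all_goals split <;> try omega
  all_goals try (split <;> try omega)
  · rcases Nat.lt_or_ge j.val j'.val with hlt | hge
    · have := key j.val j'.val (by omega) (by omega) hlt (by omega); omega
    · have := key j'.val j.val (by omega) (by omega) (by omega) (by omega); omega

lemma gcol_pair {a a' : Fin 3} {i i' : Fin (2*s+1)} {k k' : Fin (2*s+2)}
    (h1 : gcol s a i k = 3 + i'.val) (h2 : gcol s a' i' k' = 3 + i.val) : False := by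
  have hk := k.isLt
  have hk' := k'.isLt
  have hi := i.isLt
  have hi' := i'.isLt
  have hb1 : s+2 ≤ k.val := by
    by_contra hb
    unfold gcol at h1
    split at h1 <;> [omega; (split at h1 <;> omega)]
  have hb2 : s+2 ≤ k'.val := by
    by_contra hb
    unfold gcol at h2
    split at h2 <;> [omega; (split at h2 <;> omega)]
  rw [gcol_branch3 _ _ _ hb1] at h1
  rw [gcol_branch3 _ _ _ hb2] at h2
  have ha1 : i.val + k.val - (s+1) = i.val + (k.val - (s+1)) := by omega
  have ha2 : i'.val + k'.val - (s+1) = i'.val + (k'.val - (s+1)) := by omega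
  rw [ha1] at h1
  rw [ha2] at h2
  have e1 : (i.val + (k.val - (s+1))) % (2*s+1) = i'.val := by omega
  have e2 : (i'.val + (k'.val - (s+1))) % (2*s+1) = i.val := by omega
  have e3 : (i.val + ((k.val - (s+1)) + (k'.val - (s+1)))) % (2*s+1) = i.val % (2*s+1) := by
    rw [Nat.mod_eq_of_lt hi, ← Nat.add_assoc, ← Nat.mod_add_mod, e1, e2]
  have h6 := mod_add_cancel e3
  have h7 := Nat.dvd_of_mod_eq_zero h6
  have := Nat.le_of_dvd (by omega) h7
  omega

end Extremal

namespace Extremal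

variable {s : ℕ}

lemma gcol_ne_tri {a b : Fin 3} (hab : a ≠ b) (i : Fin (2*s+1)) (j : Fin (2*s+2)) :
    gcol s b i j ≠ tri a b := by
  have h3 : tri a b < 3 := tri_lt hab
  have hb : (2:ℕ) - b.val ≠ tri a b := by
    fin_cases a <;> fin_cases b <;> simp_all [tri]
  unfold gcol
  split
  · exact hb
  split <;> omega

def c0 : Vtx s → Vtx s → ℕ
  | .T a, .T b => tri a b
  | .T _, .M _ i => 3 + i.val
  | .M _ i, .T _ => 3 + i.val
  | .M _ _, .L a i j => gcol s a i j
  | .L a i j, .M _ _ => gcol s a i j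
  | _, _ => 0

lemma c0_symm (u v : Vtx s) : c0 u v = c0 v u := by
  cases u <;> cases v <;> simp [c0, tri_symm]

def col (s : ℕ) : Sym2 (Vtx s) → ℕ := Sym2.lift ⟨c0, c0_symm⟩

@[simp] lemma col_mk (u v : Vtx s) : col s s(u, v) = c0 u v := rfl

lemma col_lt {u v : Vtx s} (h : (G s).Adj u v) : col s s(u, v) < 3*s+5 := by
  cases u <;> cases v <;> simp_all [col, c0]
  · exact lt_of_lt_of_le (tri_lt (by assumption)) (by omega)
  · rename_i i; have := i.isLt; omega
  · rename_i i _; have := i.isLt; omega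
  · exact gcol_lt _ _ _
  · exact gcol_lt _ _ _

lemma col_proper : ∀ ⦃u v w : Vtx s⦄, (G s).Adj u v → (G s).Adj u w → v ≠ w →
    col s s(u, v) ≠ col s s(u, w) := by
  intro u v w huv huw hvw
  cases u with
  | T a =>
    cases v with
    | T b =>
      cases w with
      | T b' =>
        have hb : b ≠ b' := fun h => hvw (by rw [h])
        exact fun h => tri_inj huv huw hb h
      | M b' i =>
        have := (adj_TM).mp huw
        have h1 := tri_lt (show a ≠ b from huv)
        simp only [col_mk, c0]
        omega
      | L b' i j => exact absurd huw (by simp)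
    | M b i =>
      cases w with
      | T b' =>
        have h1 := tri_lt (show a ≠ b' from huw)
        simp only [col_mk, c0]
        omega
      | M b' i' =>
        obtain rfl := (adj_TM).mp huv
        obtain rfl := (adj_TM).mp huw
        have hii : i ≠ i' := fun h => hvw (by rw [h])
        simp only [col_mk, c0]
        exact fun h => hii (Fin.ext (by omega))
      | L b' i j => exact absurd huw (by simp)
    | L b i j => exact absurd huv (by simp)
  | M a i =>
    cases v with
    | T b =>
      cases w with
      | T b' =>
        obtain rfl := (adj_MT).mp huv
        obtain rfl := (adj_MT).mp huw
        exact absurd rfl hvw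
      | M b' i' => exact absurd huw (by simp)
      | L b' i' j =>
        obtain ⟨rfl, rfl⟩ := (adj_ML).mp huw
        simp only [col_mk, c0]
        exact fun h => gcol_ne_f a i j h.symm
    | M b i' => exact absurd huv (by simp)
    | L b i' j =>
      obtain ⟨rfl, rfl⟩ := (adj_ML).mp huv
      cases w with
      | T b' =>
        simp only [col_mk, c0]
        exact gcol_ne_f a i j
      | M b' i'' => exact absurd huw (by simp)
      | L b' i'' j' =>
        obtain ⟨rfl, rfl⟩ := (adj_ML).mp huw
        have hjj : j ≠ j' := fun h => hvw (by rw [h])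
        simp only [col_mk, c0]
        exact gcol_inj a i hjj
  | L a i j =>
    cases v with
    | M b i' =>
      obtain ⟨rfl, rfl⟩ := (adj_LM).mp huv
      cases w with
      | M b' i'' =>
        obtain ⟨rfl, rfl⟩ := (adj_LM).mp huw
        exact absurd rfl hvw
      | _ => exact absurd huw (by simp)
    | _ => exact absurd huv (by simp)

end Extremal

namespace Extremal

variable {s : ℕ}

lemma col_star : ∀ v₀ v₁ v₂ v₃ v₄ : Vtx s, (G s).Adj v₀ v₁ → (G s).Adj v₁ v₂ →
    (G s).Adj v₂ v₃ → (G s).Adj v₃ v₄ →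
    v₀ ≠ v₁ → v₀ ≠ v₂ → v₀ ≠ v₃ → v₁ ≠ v₂ → v₁ ≠ v₃ → v₂ ≠ v₃ →
    v₄ ≠ v₁ → v₄ ≠ v₂ → v₄ ≠ v₃ →
    ¬(col s s(v₀, v₁) = col s s(v₂, v₃) ∧ col s s(v₁, v₂) = col s s(v₃, v₄)) := by
  intro v0 v1 v2 v3 v4 h01 h12 h23 h34 h0ne1 h02 h03 h1ne2 h13 h2ne3 h41 h42 h43
  rintro ⟨hA, hB⟩
  cases v2 with
  | L a i j =>
    have e1 : v1 = Vtx.M a i := by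
      cases v1 with
      | M b k => obtain ⟨h1e, h2e⟩ := (adj_LM).mp ((G s).adj_symm h12); rw [h1e, h2e]
      | T _ => exact absurd h12 (by simp)
      | L _ _ _ => exact absurd h12 (by simp)
    have e3 : v3 = Vtx.M a i := by
      cases v3 with
      | M b k => obtain ⟨h1e, h2e⟩ := (adj_ML).mp ((G s).adj_symm h23); rw [← h1e, ← h2e]
      | T _ => exact absurd h23 (by simp)
      | L _ _ _ => exact absurd h23 (by simp)
    exact h13 (e1.trans e3.symm)
  | M a i =>
    cases v1 with
    | T b =>
      obtain rfl := (adj_TM).mp h12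
      cases v3 with
      | T b' =>
        obtain rfl := (adj_MT).mp h23
        exact h13 rfl
      | M _ _ => exact absurd h23 (by simp)
      | L b' i' j' =>
        obtain ⟨h1e, h2e⟩ := (adj_ML).mp h23
        have : v4 = Vtx.M b i := by
          cases v4 with
          | M c k =>
            obtain ⟨h3e, h4e⟩ := (adj_LM).mp h34
            rw [← h3e, ← h4e, h1e, h2e]
          | T _ => exact absurd h34 (by simp)
          | L _ _ _ => exact absurd h34 (by simp)
        exact h42 this
    | M _ _ => exact absurd h12 (by simp)
    | L b i' j' =>
      obtain ⟨h1e, h2e⟩ := (adj_LM).mp h12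
      have : v0 = Vtx.M a i := by
        cases v0 with
        | M c k =>
          obtain ⟨h3e, h4e⟩ := (adj_ML).mp h01
          rw [h3e, h4e, h1e, h2e]
        | T _ => exact absurd h01 (by simp)
        | L _ _ _ => exact absurd h01 (by simp)
      exact h02 this
  | T b =>
    cases v1 with
    | L _ _ _ => exact absurd h12 (by simp)
    | T a =>
      have hab : a ≠ b := h12
      cases v3 with
      | L _ _ _ => exact absurd h23 (by simp)
      | T c =>
        have hcb : b ≠ c := h23
        cases v0 with
        | L _ _ _ => exact absurd h01 (by simp)
        | T x =>
          have hxa : x ≠ a := h01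
          have hxb : x ≠ b := fun h => h02 (by rw [h])
          have hxc : x ≠ c := fun h => h03 (by rw [h])
          have hac : a ≠ c := fun h => h13 (by rw [h])
          fin_cases x <;> fin_cases a <;> fin_cases b <;> fin_cases c <;> simp_all
        | M x xi =>
          obtain rfl := (adj_MT).mp h01
          have := tri_lt hcb
          simp only [col_mk, c0] at hA
          omega
      | M b' jj =>
        obtain rfl := (adj_TM).mp h23
        cases v4 with
        | T y =>
          obtain rfl := (adj_MT).mp h34
          exact h42 rfl
        | M _ _ => exact absurd h34 (by simp)
        | L c ci cj =>
          obtain ⟨h1e, h2e⟩ := (adj_ML).mp h34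
          subst h1e
          subst h2e
          simp only [col_mk, c0] at hB
          exact gcol_ne_tri hab jj cj hB.symm
    | M b' ii =>
      obtain rfl := (adj_MT).mp h12
      cases v0 with
      | T y =>
        obtain rfl := (adj_TM).mp h01
        exact h02 rfl
      | M _ _ => exact absurd h01 (by simp)
      | L c ci cj =>
        obtain ⟨h1e, h2e⟩ := (adj_ML).mp ((G s).adj_symm h01)
        subst h1e
        subst h2e
        cases v3 with
        | L _ _ _ => exact absurd h23 (by simp)
        | T c' =>
          have hbc : b' ≠ c' := h23
          simp only [col_mk, c0] at hA
          rw [tri_symm] at hA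
          exact gcol_ne_tri (Ne.symm hbc) ii cj hA
        | M b'' jj =>
          obtain rfl := (adj_TM).mp h23
          cases v4 with
          | T y =>
            obtain rfl := (adj_MT).mp h34
            exact h42 rfl
          | M _ _ => exact absurd h34 (by simp)
          | L d di dj =>
            obtain ⟨h3e, h4e⟩ := (adj_ML).mp h34
            subst h3e
            subst h4e
            simp only [col_mk, c0] at hA hB
            exact gcol_pair hA hB.symm

end Extremal

namespace Extremal

section LowerBound

variable {V : Type*} [Fintype V] [DecidableEq V] {G : SimpleGraph V} [DecidableRel G.Adj]
variable {c : Sym2 V → ℕ}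

/-- colors at a vertex -/
def Scol (G : SimpleGraph V) [DecidableRel G.Adj] (c : Sym2 V → ℕ) (v : V) : Finset ℕ :=
  (G.neighborFinset v).image (fun u => c s(v, u))

lemma mem_Scol_of_adj {v u : V} (h : G.Adj v u) : c s(v, u) ∈ Scol G c v :=
  Finset.mem_image_of_mem _ (by rwa [SimpleGraph.mem_neighborFinset])

variable (hp : ∀ ⦃u v w : V⦄, G.Adj u v → G.Adj u w → v ≠ w → c s(u, v) ≠ c s(u, w))

include hp

lemma card_Scol (v : V) : (Scol G c v).card = G.degree v := by
  rw [Scol, Finset.card_image_of_injOn, SimpleGraph.card_neighborFinset_eq_degree]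
  intro a ha b hb hab
  by_contra hne
  exact hp (by rwa [← SimpleGraph.mem_neighborFinset]) (by rwa [← SimpleGraph.mem_neighborFinset])
    hne hab

lemma pair_lemma
    (hs : ∀ v₀ v₁ v₂ v₃ v₄ : V, G.Adj v₀ v₁ → G.Adj v₁ v₂ → G.Adj v₂ v₃ → G.Adj v₃ v₄ →
      v₀ ≠ v₁ → v₀ ≠ v₂ → v₀ ≠ v₃ → v₁ ≠ v₂ → v₁ ≠ v₃ → v₂ ≠ v₃ →
      v₄ ≠ v₁ → v₄ ≠ v₂ → v₄ ≠ v₃ →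
      ¬(c s(v₀, v₁) = c s(v₂, v₃) ∧ c s(v₁, v₂) = c s(v₃, v₄)))
    {v u1 u2 : V} (h1 : G.Adj v u1) (h2 : G.Adj v u2) (h12 : u1 ≠ u2) :
    ¬(c s(v, u2) ∈ (Scol G c u1).erase (c s(u1, v)) ∧
      c s(v, u1) ∈ (Scol G c u2).erase (c s(u2, v))) := by
  rintro ⟨ha, hb⟩
  obtain ⟨hne1, hmem1⟩ := Finset.mem_erase.mp ha
  obtain ⟨w1, hw1, hcw1⟩ := Finset.mem_image.mp hmem1
  rw [SimpleGraph.mem_neighborFinset] at hw1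
  obtain ⟨hne2, hmem2⟩ := Finset.mem_erase.mp hb
  obtain ⟨w2, hw2, hcw2⟩ := Finset.mem_image.mp hmem2
  rw [SimpleGraph.mem_neighborFinset] at hw2
  have hw1v : w1 ≠ v := by
    rintro rfl
    exact hne1 hcw1.symm
  have hw2v : w2 ≠ v := by
    rintro rfl
    exact hne2 hcw2.symm
  have hw1u2 : w1 ≠ u2 := by
    rintro rfl
    have := hp hw1.symm h2.symm (Ne.symm h1.ne)
    rw [Sym2.eq_swap] at this
    exact this (hcw1.trans (by rw [Sym2.eq_swap]))
  have hw2u1 : w2 ≠ u1 := by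
    rintro rfl
    have := hp hw2.symm h1.symm (Ne.symm h2.ne)
    rw [Sym2.eq_swap] at this
    exact this (hcw2.trans (by rw [Sym2.eq_swap]))
  refine hs w1 u1 v u2 w2 hw1.symm h1.symm h2 hw2 (Ne.symm hw1.ne) hw1v hw1u2
    (Ne.symm h1.ne) h12 h2.ne hw2u1 hw2v (Ne.symm hw2.ne) ⟨?_, ?_⟩
  · rw [Sym2.eq_swap]; exact hcw1
  · rw [Sym2.eq_swap (a := u1)]; exact hcw2.symm

lemma tightness {t : ℕ}
    (hs : ∀ v₀ v₁ v₂ v₃ v₄ : V, G.Adj v₀ v₁ → G.Adj v₁ v₂ → G.Adj v₂ v₃ → G.Adj v₃ v₄ →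
      v₀ ≠ v₁ → v₀ ≠ v₂ → v₀ ≠ v₃ → v₁ ≠ v₂ → v₁ ≠ v₃ → v₂ ≠ v₃ →
      v₄ ≠ v₁ → v₄ ≠ v₂ → v₄ ≠ v₃ →
      ¬(c s(v₀, v₁) = c s(v₂, v₃) ∧ c s(v₁, v₂) = c s(v₃, v₄)))
    (hb : ∀ ⦃u v : V⦄, G.Adj u v → c s(u, v) < 3*t+1)
    {v : V} (hdv : G.degree v = 2*t+1)
    (hdnb : ∀ u, G.Adj v u → G.degree u = 2*t+1) :
    (∀ u, G.Adj v u → Finset.range (3*t+1) \ Scol G c v ⊆ (Scol G c u).erase (c s(u, v)))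
    ∧ (∀ u w, G.Adj v u → G.Adj v w → u ≠ w →
        c s(v, w) ∈ (Scol G c u).erase (c s(u, v)) ∨
        c s(v, u) ∈ (Scol G c w).erase (c s(w, v))) := by
  classical
  set N := G.neighborFinset v with hN
  set S := Scol G c v with hS
  set A : V → Finset ℕ := fun u => (Scol G c u).erase (c s(u, v)) with hA
  have hmemN : ∀ u, u ∈ N → G.Adj v u := fun u hu => by
    rwa [hN, SimpleGraph.mem_neighborFinset] at hu
  have hNcard : N.card = 2*t+1 := by
    rw [hN, SimpleGraph.card_neighborFinset_eq_degree, hdv]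
  have hScard : S.card = 2*t+1 := by rw [hS, card_Scol hp, hdv]
  have hSsub : S ⊆ Finset.range (3*t+1) := by
    intro x hx
    obtain ⟨w, hw, rfl⟩ := Finset.mem_image.mp hx
    rw [SimpleGraph.mem_neighborFinset] at hw
    exact Finset.mem_range.mpr (hb hw)
  have hAcard : ∀ u ∈ N, (A u).card = 2*t := by
    intro u hu
    have hadj := hmemN u hu
    have h1 : (Scol G c u).card = 2*t+1 := by rw [card_Scol hp, hdnb u hadj]
    have h2 : c s(u, v) ∈ Scol G c u := mem_Scol_of_adj hadj.symm
    have hAu : A u = (Scol G c u).erase (c s(u, v)) := by rw [hA]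
    rw [hAu, Finset.card_erase_of_mem h2, h1]
    omega
  have hAsub : ∀ u ∈ N, A u ⊆ Finset.range (3*t+1) := by
    intro u hu x hx
    obtain ⟨w, hw, rfl⟩ := Finset.mem_image.mp (Finset.mem_of_mem_erase hx)
    rw [SimpleGraph.mem_neighborFinset] at hw
    exact Finset.mem_range.mpr (hb hw)
  -- the "arc" sets
  set W : V → Finset V := fun u => N.filter (fun w => w ≠ u ∧ c s(v, w) ∈ A u) with hW
  have hWcard : ∀ u ∈ N, (W u).card = (A u ∩ S).card := by
    intro u hu
    apply Finset.card_bij (fun w _ => c s(v, w))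
    · intro w hw
      obtain ⟨hwN, hwu, hwA⟩ := Finset.mem_filter.mp hw
      exact Finset.mem_inter.mpr ⟨hwA, mem_Scol_of_adj (hmemN w hwN)⟩
    · intro w1 hw1 w2 hw2 heq
      by_contra hne
      exact hp (hmemN w1 (Finset.mem_filter.mp hw1).1) (hmemN w2 (Finset.mem_filter.mp hw2).1)
        hne heq
    · intro x hx
      obtain ⟨hxA, hxS⟩ := Finset.mem_inter.mp hx
      obtain ⟨w, hwN, rfl⟩ := Finset.mem_image.mp hxS
      refine ⟨w, Finset.mem_filter.mpr ⟨hwN, ?_, hxA⟩, rfl⟩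
      rintro rfl
      have : c s(v, w) = c s(w, v) := by rw [Sym2.eq_swap]
      exact (Finset.mem_erase.mp hxA).1 (this)
  have hASlow : ∀ u ∈ N, t ≤ (A u ∩ S).card := by
    intro u hu
    have h1 : (A u ∩ S).card + (A u \ S).card = (A u).card := Finset.card_inter_add_card_sdiff _ _
    have h2 : (A u \ S).card ≤ (Finset.range (3*t+1) \ S).card := by
      apply Finset.card_le_card
      intro x hx
      obtain ⟨hx1, hx2⟩ := Finset.mem_sdiff.mp hx
      exact Finset.mem_sdiff.mpr ⟨hAsub u hu hx1, hx2⟩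
    have h3 : (Finset.range (3*t+1) \ S).card = t := by
      rw [Finset.card_sdiff_of_subset hSsub, Finset.card_range, hScard]
      omega
    have h4 := hAcard u hu
    omega
  -- the arc relation as a finset of ordered pairs
  set P : Finset (V × V) := N.offDiag.filter (fun p => c s(v, p.2) ∈ A p.1) with hP
  have hPmem : ∀ p : V × V, p ∈ P ↔ p.1 ∈ N ∧ p.2 ∈ N ∧ p.1 ≠ p.2 ∧ c s(v, p.2) ∈ A p.1 := by
    intro p
    rw [hP, Finset.mem_filter, Finset.mem_offDiag]
    tauto
  have hPcard : P.card = ∑ u ∈ N, (W u).card := by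
    rw [Finset.card_eq_sum_card_fiberwise (f := Prod.fst) (t := N)]
    · apply Finset.sum_congr rfl
      intro u hu
      apply Finset.card_bij (fun p _ => p.2)
      · intro p hpf
        obtain ⟨hpP, hpu⟩ := Finset.mem_filter.mp hpf
        rw [hPmem] at hpP
        have hWu : W u = N.filter (fun w => w ≠ u ∧ c s(v, w) ∈ A u) := by rw [hW]
        rw [hWu]
        refine Finset.mem_filter.mpr ⟨hpP.2.1, ?_, ?_⟩
        · rw [← hpu]; exact Ne.symm hpP.2.2.1
        · rw [← hpu]; exact hpP.2.2.2
      · intro p1 hp1 p2 hp2 heq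
        have e1 := (Finset.mem_filter.mp hp1).2
        have e2 := (Finset.mem_filter.mp hp2).2
        exact Prod.ext (e1.trans e2.symm) heq
      · intro w hw'
        have hWu : W u = N.filter (fun x => x ≠ u ∧ c s(v, x) ∈ A u) := by rw [hW]
        rw [hWu] at hw'
        have hww := Finset.mem_filter.mp hw'
        refine ⟨(u, w), Finset.mem_filter.mpr ⟨?_, rfl⟩, rfl⟩
        rw [hPmem]
        exact ⟨hu, hww.1, Ne.symm hww.2.1, hww.2.2⟩
    · intro p hp
      rw [Finset.mem_coe, hPmem] at hp
      exact hp.1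
  have hWlow : ∀ u ∈ N, t ≤ (W u).card := fun u hu => (hWcard u hu) ▸ hASlow u hu
  set Psw := P.image Prod.swap with hPsw
  have hPswcard : Psw.card = P.card := Finset.card_image_of_injective _ Prod.swap_injective
  have hdisj : Disjoint P Psw := by
    rw [Finset.disjoint_left]
    intro p hpP hpSw
    obtain ⟨q, hqP, hq⟩ := Finset.mem_image.mp hpSw
    rw [hPmem] at hpP hqP
    have hq1 : q.1 = p.2 := by
      have h := congrArg Prod.snd hq
      rwa [Prod.snd_swap] at h
    have hq2 : q.2 = p.1 := by
      have h := congrArg Prod.fst hq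
      rwa [Prod.fst_swap] at h
    apply pair_lemma hp hs (hmemN _ hpP.1) (hmemN _ hpP.2.1) hpP.2.2.1
    refine ⟨hpP.2.2.2, ?_⟩
    have h9 := hqP.2.2.2
    rw [hq1, hq2] at h9
    exact h9
  have hsub2 : P ∪ Psw ⊆ N.offDiag := by
    intro p hp'
    rcases Finset.mem_union.mp hp' with h | h
    · rw [hPmem] at h
      exact Finset.mem_offDiag.mpr ⟨h.1, h.2.1, h.2.2.1⟩
    · obtain ⟨q, hqP, hq⟩ := Finset.mem_image.mp h
      rw [hPmem] at hqP
      rw [← hq]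
      exact Finset.mem_offDiag.mpr ⟨hqP.2.1, hqP.1, Ne.symm hqP.2.2.1⟩
  have hoffcard : N.offDiag.card = (2*t+1) * (2*t) := by
    rw [Finset.offDiag_card, hNcard]
    have e : (2*t+1) * (2*t+1) = (2*t+1)*(2*t) + (2*t+1) := by ring
    omega
  have hunion : (P ∪ Psw).card = P.card + Psw.card := Finset.card_union_of_disjoint hdisj
  have hPle : P.card ≤ (2*t+1) * t := by
    have h10 := Finset.card_le_card hsub2
    have e2 : (2*t+1) * (2*t) = 2 * ((2*t+1) * t) := by ring
    omega
  have hPge : (2*t+1) * t ≤ P.card := by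
    rw [hPcard]
    calc (2*t+1) * t = ∑ _u ∈ N, t := by rw [Finset.sum_const, hNcard, smul_eq_mul]
    _ ≤ ∑ u ∈ N, (W u).card := Finset.sum_le_sum hWlow
  have hPeq : P.card = (2*t+1) * t := le_antisymm hPle hPge
  have hWeq : ∀ u ∈ N, (W u).card = t := by
    intro u hu
    by_contra hne
    have hgt : t + 1 ≤ (W u).card := by
      have := hWlow u hu; omega
    have hsum : ∑ x ∈ N, (W x).card = (2*t+1) * t := by rw [← hPcard, hPeq]
    have h7 : (W u).card + ∑ x ∈ N.erase u, (W x).card = ∑ x ∈ N, (W x).card :=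
      Finset.add_sum_erase N (fun x => (W x).card) hu
    have hce : (N.erase u).card = 2*t := by
      rw [Finset.card_erase_of_mem hu, hNcard]
      omega
    have h8 : (2*t) * t ≤ ∑ x ∈ N.erase u, (W x).card := by
      calc (2*t)*t = ∑ _x ∈ N.erase u, t := by rw [Finset.sum_const, hce, smul_eq_mul]
      _ ≤ _ := Finset.sum_le_sum (fun w hw => hWlow w (Finset.mem_of_mem_erase hw))
    have e3 : (2*t+1) * t = (2*t)*t + t := by ring
    omega
  have hUeq : P ∪ Psw = N.offDiag := by
    apply Finset.eq_of_subset_of_card_le hsub2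
    have e2 : (2*t+1) * (2*t) = 2 * ((2*t+1) * t) := by ring
    omega
  constructor
  · intro u hadj
    have hu : u ∈ N := by rwa [hN, SimpleGraph.mem_neighborFinset]
    have hAS : (A u ∩ S).card = t := by rw [← hWcard u hu, hWeq u hu]
    have h1 : (A u ∩ S).card + (A u \ S).card = (A u).card := Finset.card_inter_add_card_sdiff _ _
    have h2 : (A u \ S).card = t := by
      have := hAcard u hu
      omega
    have h3 : A u \ S ⊆ Finset.range (3*t+1) \ S := by
      intro x hx
      obtain ⟨hx1, hx2⟩ := Finset.mem_sdiff.mp hx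
      exact Finset.mem_sdiff.mpr ⟨hAsub u hu hx1, hx2⟩
    have h4 : (Finset.range (3*t+1) \ S).card = t := by
      rw [Finset.card_sdiff_of_subset hSsub, Finset.card_range, hScard]
      omega
    have h5 : A u \ S = Finset.range (3*t+1) \ S :=
      Finset.eq_of_subset_of_card_le h3 (by omega)
    intro x hx
    rw [← h5] at hx
    exact (Finset.mem_sdiff.mp hx).1
  · intro u w hadju hadjw huw
    have hu : u ∈ N := by rwa [hN, SimpleGraph.mem_neighborFinset]
    have hw' : w ∈ N := by rwa [hN, SimpleGraph.mem_neighborFinset]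
    have hmem : (u, w) ∈ N.offDiag := Finset.mem_offDiag.mpr ⟨hu, hw', huw⟩
    rw [← hUeq] at hmem
    rcases Finset.mem_union.mp hmem with h | h
    · left; exact ((hPmem _).mp h).2.2.2
    · right
      obtain ⟨q, hqP, hq⟩ := Finset.mem_image.mp h
      have hq1 : q.1 = w := by
        have h := congrArg Prod.snd hq
        rwa [Prod.snd_swap] at h
      have hq2 : q.2 = u := by
        have h := congrArg Prod.fst hq
        rwa [Prod.fst_swap] at h
      have h9 := ((hPmem _).mp hqP).2.2.2
      rw [hq1, hq2] at h9
      exact h9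

lemma no_small_star_coloring {t : ℕ}
    (hs : ∀ v₀ v₁ v₂ v₃ v₄ : V, G.Adj v₀ v₁ → G.Adj v₁ v₂ → G.Adj v₂ v₃ → G.Adj v₃ v₄ →
      v₀ ≠ v₁ → v₀ ≠ v₂ → v₀ ≠ v₃ → v₁ ≠ v₂ → v₁ ≠ v₃ → v₂ ≠ v₃ →
      v₄ ≠ v₁ → v₄ ≠ v₂ → v₄ ≠ v₃ →
      ¬(c s(v₀, v₁) = c s(v₂, v₃) ∧ c s(v₁, v₂) = c s(v₃, v₄)))
    (hb : ∀ ⦃u v : V⦄, G.Adj u v → c s(u, v) < 3*t+1)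
    {r x y : V} (hrx : G.Adj r x) (hry : G.Adj r y) (hxy : G.Adj x y)
    (hnr : ∀ u, G.Adj r u → G.degree u = 2*t+1)
    (hnx : ∀ u, G.Adj x u → G.degree u = 2*t+1)
    (hny : ∀ u, G.Adj y u → G.degree u = 2*t+1) : False := by
  classical
  have hdr : G.degree r = 2*t+1 := hnx r hrx.symm
  have hdx : G.degree x = 2*t+1 := hnr x hrx
  have hdy : G.degree y = 2*t+1 := hnr y hry
  obtain ⟨ir, iir⟩ := tightness hp hs hb hdr hnr
  obtain ⟨ix, iix⟩ := tightness hp hs hb hdx hnx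
  obtain ⟨iy, iiy⟩ := tightness hp hs hb hdy hny
  have hswap : ∀ a b : V, c s(a, b) = c s(b, a) := fun a b => by rw [Sym2.eq_swap]
  set Sr := Scol G c r with hSr
  set Sx := Scol G c x with hSx
  set Sy := Scol G c y with hSy
  have hαSr : c s(r, x) ∈ Sr := mem_Scol_of_adj hrx
  have hαSx : c s(r, x) ∈ Sx := by rw [hswap]; exact mem_Scol_of_adj hrx.symm
  have hβSr : c s(r, y) ∈ Sr := mem_Scol_of_adj hry
  have hβSy : c s(r, y) ∈ Sy := by rw [hswap]; exact mem_Scol_of_adj hry.symm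
  have hγSx : c s(x, y) ∈ Sx := mem_Scol_of_adj hxy
  have hγSy : c s(x, y) ∈ Sy := by rw [hswap]; exact mem_Scol_of_adj hxy.symm
  set Ox := Finset.range (3*t+1) \ Sx with hOx
  set Oy := Finset.range (3*t+1) \ Sy with hOy
  have hsub : ∀ v : V, Scol G c v ⊆ Finset.range (3*t+1) := by
    intro v z hz
    obtain ⟨w, hw, rfl⟩ := Finset.mem_image.mp hz
    rw [SimpleGraph.mem_neighborFinset] at hw
    exact Finset.mem_range.mpr (hb hw)
  have hOxSr : Ox ⊆ Sr := fun z hz => Finset.mem_of_mem_erase (ix r hrx.symm hz)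
  have hOxSy : Ox ⊆ Sy := fun z hz => Finset.mem_of_mem_erase (ix y hxy hz)
  have hOySr : Oy ⊆ Sr := fun z hz => Finset.mem_of_mem_erase (iy r hry.symm hz)
  have hOySx : Oy ⊆ Sx := fun z hz => Finset.mem_of_mem_erase (iy x hxy.symm hz)
  have hdisjxy : Disjoint Ox Oy := by
    rw [Finset.disjoint_left]
    intro z hz1 hz2
    exact (Finset.mem_sdiff.mp hz2).2 (hOxSy hz1)
  have hOxcard : Ox.card = t := by
    rw [hOx, Finset.card_sdiff_of_subset (hsub x), Finset.card_range, card_Scol hp, hdx]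
    omega
  have hOycard : Oy.card = t := by
    rw [hOy, Finset.card_sdiff_of_subset (hsub y), Finset.card_range, card_Scol hp, hdy]
    omega
  have hUsub : Ox ∪ Oy ⊆ Sr := Finset.union_subset hOxSr hOySr
  have hSrcard : Sr.card = 2*t+1 := by rw [hSr, card_Scol hp, hdr]
  have hUcard : (Ox ∪ Oy).card = 2*t := by
    rw [Finset.card_union_of_disjoint hdisjxy, hOxcard, hOycard]
    omega
  have hcard1 : (Sr \ (Ox ∪ Oy)).card = 1 := by
    rw [Finset.card_sdiff_of_subset hUsub, hSrcard, hUcard]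
    omega
  obtain ⟨δ, hδ⟩ := Finset.card_eq_one.mp hcard1
  have htrich : ∀ z ∈ Sr, z ∉ Ox → z ∉ Oy → z = δ := by
    intro z hz h1 h2
    have hmem : z ∈ Sr \ (Ox ∪ Oy) := Finset.mem_sdiff.mpr ⟨hz, by
      rw [Finset.mem_union]; tauto⟩
    rw [hδ] at hmem
    exact Finset.mem_singleton.mp hmem
  have hnotOx : ∀ z, z ∈ Sx → z ∉ Ox := fun z hz h => (Finset.mem_sdiff.mp h).2 hz
  have hnotOy : ∀ z, z ∈ Sy → z ∉ Oy := fun z hz h => (Finset.mem_sdiff.mp h).2 hz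
  have hαβ : c s(r, x) ≠ c s(r, y) := hp hrx hry hxy.ne
  have hαγ : c s(r, x) ≠ c s(x, y) := by
    have h := hp hrx.symm hxy hry.ne
    rwa [← hswap r x] at h
  have hβγ : c s(r, y) ≠ c s(x, y) := by
    have h := hp hry.symm hxy.symm hrx.ne
    rwa [← hswap r y, ← hswap x y] at h
  have hαcases : c s(r, x) ∈ Oy ∨ c s(r, x) = δ := by
    by_cases h : c s(r, x) ∈ Oy
    · exact Or.inl h
    · exact Or.inr (htrich _ hαSr (hnotOx _ hαSx) h)
  have hβcases : c s(r, y) ∈ Ox ∨ c s(r, y) = δ := by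
    by_cases h : c s(r, y) ∈ Ox
    · exact Or.inl h
    · exact Or.inr (htrich _ hβSr h (hnotOy _ hβSy))
  rcases hαcases with hαOy | hαδ
  · -- case α ∉ Sy
    have hαnSy : c s(r, x) ∉ Sy := (Finset.mem_sdiff.mp hαOy).2
    have h1 := iix r y hrx.symm hxy hry.ne
    rcases h1 with h1 | h1
    · have hγSr : c s(x, y) ∈ Sr := by
        have := Finset.mem_of_mem_erase h1
        rwa [hSr]
      have hγδ : c s(x, y) = δ := htrich _ hγSr (hnotOx _ hγSx) (hnotOy _ hγSy)
      have h2 := iir x y hrx hry hxy.ne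
      rcases h2 with h2 | h2
      · have hβSx : c s(r, y) ∈ Sx := Finset.mem_of_mem_erase h2
        have hβδ : c s(r, y) = δ := htrich _ hβSr (hnotOx _ hβSx) (hnotOy _ hβSy)
        exact hβγ (hβδ.trans hγδ.symm)
      · exact hαnSy (Finset.mem_of_mem_erase h2)
    · have : c s(r, x) ∈ Sy := by
        rw [hswap r x]
        exact Finset.mem_of_mem_erase h1
      exact hαnSy this
  · rcases hβcases with hβOx | hβδ
    · have hβnSx : c s(r, y) ∉ Sx := (Finset.mem_sdiff.mp hβOx).2
      have h1 := iiy r x hry.symm hxy.symm hrx.ne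
      rcases h1 with h1 | h1
      · have hγSr : c s(x, y) ∈ Sr := by
          have := Finset.mem_of_mem_erase h1
          rwa [← hswap x y] at this
        have hγδ : c s(x, y) = δ := htrich _ hγSr (hnotOx _ hγSx) (hnotOy _ hγSy)
        have h2 := iir x y hrx hry hxy.ne
        rcases h2 with h2 | h2
        · exact hβnSx (Finset.mem_of_mem_erase h2)
        · have hαSy : c s(r, x) ∈ Sy := Finset.mem_of_mem_erase h2
          have hαδ : c s(r, x) = δ := htrich _ hαSr (hnotOx _ hαSx) (hnotOy _ hαSy)
          exact hαγ (hαδ.trans hγδ.symm)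
      · have : c s(r, y) ∈ Sx := by
          rw [hswap r y]
          exact Finset.mem_of_mem_erase h1
        exact hβnSx this
    · exact hαβ (hαδ.trans hβδ.symm)

end LowerBound

end Extremal

namespace Extremal

variable {s : ℕ}

lemma star_colorable_G : StarColorable (G s) (3*s+5) :=
  ⟨col s, fun _ _ h => col_lt h, col_proper, col_star⟩

lemma nbrs_deg_T (a : Fin 3) : ∀ u, (G s).Adj (.T a) u → (G s).degree u = 2*(s+1)+1 := by
  intro u hu
  cases u with
  | T b => rw [degree_T]; omega
  | M b i => rw [degree_M]; omega
  | L b i j => exact absurd hu (by simp)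

lemma not_star_colorable : ¬ StarColorable (G s) (3*s+4) := by
  rintro ⟨c, hb, hp, hs⟩
  refine no_small_star_coloring (t := s+1) hp hs ?_
    (r := Vtx.T 0) (x := Vtx.T 1) (y := Vtx.T 2)
    ?_ ?_ ?_ (nbrs_deg_T 0) (nbrs_deg_T 1) (nbrs_deg_T 2)
  · intro u v h
    have := hb h
    omega
  · show (0 : Fin 3) ≠ 1
    decide
  · show (0 : Fin 3) ≠ 2
    decide
  · show (1 : Fin 3) ≠ 2
    decide

end Extremal

section Transfer

lemma starColorable_comap {W V : Type*} (e : W ≃ V) (Gr : SimpleGraph V) {k : ℕ}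
    (h : StarColorable Gr k) : StarColorable (Gr.comap ⇑e) k := by
  obtain ⟨c, hb, hp, hs⟩ := h
  refine ⟨fun z => c (Sym2.map e z), ?_, ?_, ?_⟩
  · intro u v huv
    simp only [Sym2.map_pair_eq]
    exact hb huv
  · intro u v w huv huw hvw
    simp only [Sym2.map_pair_eq]
    exact hp huv huw (fun hh => hvw (e.injective hh))
  · intro v0 v1 v2 v3 v4 h01 h12 h23 h34 n01 n02 n03 n12 n13 n23 n41 n42 n43
    simp only [Sym2.map_pair_eq]
    exact hs (e v0) (e v1) (e v2) (e v3) (e v4) h01 h12 h23 h34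
      (fun hh => n01 (e.injective hh)) (fun hh => n02 (e.injective hh))
      (fun hh => n03 (e.injective hh)) (fun hh => n12 (e.injective hh))
      (fun hh => n13 (e.injective hh)) (fun hh => n23 (e.injective hh))
      (fun hh => n41 (e.injective hh)) (fun hh => n42 (e.injective hh))
      (fun hh => n43 (e.injective hh))

lemma comap_comap_equiv {W V : Type*} (e : W ≃ V) (Gr : SimpleGraph V) :
    (Gr.comap ⇑e).comap ⇑e.symm = Gr := by
  ext a b
  simp [SimpleGraph.comap]

lemma starColorable_comap_iff {W V : Type*} (e : W ≃ V) (Gr : SimpleGraph V) (k : ℕ) :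
    StarColorable (Gr.comap ⇑e) k ↔ StarColorable Gr k := by
  constructor
  · intro h
    have h2 := starColorable_comap e.symm (Gr.comap ⇑e) h
    rwa [comap_comap_equiv] at h2
  · exact starColorable_comap e Gr

lemma degree_comap {W V : Type*} [Fintype W] [Fintype V] [DecidableEq V] [DecidableEq W]
    (e : W ≃ V) (Gr : SimpleGraph V) [DecidableRel Gr.Adj]
    [DecidableRel (Gr.comap ⇑e).Adj] (w : W) :
    (Gr.comap ⇑e).degree w = Gr.degree (e w) := by
  rw [← SimpleGraph.card_neighborFinset_eq_degree, ← SimpleGraph.card_neighborFinset_eq_degree]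
  apply Finset.card_bij (fun a _ => e a)
  · intro a ha
    rw [SimpleGraph.mem_neighborFinset] at *
    exact ha
  · intro a _ b _ hab
    exact e.injective hab
  · intro v hv
    rw [SimpleGraph.mem_neighborFinset] at hv
    refine ⟨e.symm v, ?_, by simp⟩
    rw [SimpleGraph.mem_neighborFinset]
    show Gr.Adj (e w) (e (e.symm v))
    simpa using hv

end Transfer

/-- For every odd `Δ ≥ 3` there exists a cactus with maximum degree `Δ` and star
chromatic index exactly `⌊3Δ/2⌋ + 1`. -/
theorem exists_cactus_with_extremal_starChromaticIndex (Δ : ℕ) (hΔ3 : 3 ≤ Δ)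
    (hodd : Odd Δ) :
    ∃ (n : ℕ) (G : SimpleGraph (Fin n)) (_ : DecidableRel G.Adj),
      IsCactus G ∧ G.maxDegree = Δ ∧
      starChromaticIndex G = 3 * Δ / 2 + 1 := by
  classical
  obtain ⟨s, rfl⟩ : ∃ s, Δ = 2*s+3 := by
    obtain ⟨m, hm⟩ := hodd
    exact ⟨(Δ-3)/2, by omega⟩
  set e := (Fintype.equivFin (Extremal.Vtx s)).symm with he
  refine ⟨Fintype.card (Extremal.Vtx s), (Extremal.G s).comap ⇑e,
    fun a b => inferInstanceAs (Decidable ((Extremal.G s).Adj (e a) (e b))), ?_, ?_, ?_⟩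
  · -- cactus
    intro u w p q hcp hcq x hxp hxq
    let φ : ((Extremal.G s).comap ⇑e) →g (Extremal.G s) := ⟨⇑e, fun h => h⟩
    have hinj : Function.Injective ⇑φ := e.injective
    have key : ∀ {u : Fin (Fintype.card (Extremal.Vtx s))}
        (p : ((Extremal.G s).comap ⇑e).Walk u u), p.IsCycle →
        ∀ x, x ∈ p.edges ↔ Sym2.map ⇑φ x ∈ Extremal.triSet s := by
      intro u p hp x
      have hc1 : (p.map φ).IsCycle := hp.map hinj
      have h2 := Extremal.cycle_edges_eq (p.map φ) hc1
      have h3 : (Sym2.map ⇑φ x ∈ {y | y ∈ (p.map φ).edges}) ↔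
          Sym2.map ⇑φ x ∈ Extremal.triSet s := by rw [h2]
      rw [← h3]
      simp only [Set.mem_setOf_eq, SimpleGraph.Walk.edges_map]
      exact (List.mem_map_of_injective (Sym2.map.injective hinj)).symm
    ext y
    simp only [Set.mem_setOf_eq]
    rw [key p hcp y, key q hcq y]
  · -- max degree
    apply le_antisymm
    · apply SimpleGraph.maxDegree_le_of_forall_degree_le
      intro v
      rw [degree_comap]
      exact Extremal.degree_le (e v)
    · have h := SimpleGraph.degree_le_maxDegree ((Extremal.G s).comap ⇑e)
        (e.symm (Extremal.Vtx.T 0))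
      rw [degree_comap] at h
      have h2 : (Extremal.G s).degree (e (e.symm (Extremal.Vtx.T 0))) = 2*s+3 := by
        rw [Equiv.apply_symm_apply, Extremal.degree_T]
      rwa [h2] at h
  · -- star chromatic index
    have hsetEq : {k | StarColorable ((Extremal.G s).comap ⇑e) k} =
        {k | StarColorable (Extremal.G s) k} :=
      Set.ext (fun k => starColorable_comap_iff e (Extremal.G s) k)
    unfold starChromaticIndex
    rw [hsetEq]
    have hup : StarColorable (Extremal.G s) (3*s+5) := Extremal.star_colorable_G
    have hlow : ∀ m, m < 3*s+5 → ¬ StarColorable (Extremal.G s) m := by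
      rintro m hm ⟨c, hb, hstar⟩
      exact Extremal.not_star_colorable ⟨c, fun u v h => lt_of_lt_of_le (hb h) (by omega), hstar⟩
    have hne : {k | StarColorable (Extremal.G s) k}.Nonempty := ⟨_, hup⟩
    have hmem := Nat.sInf_mem hne
    have h1 : sInf {k | StarColorable (Extremal.G s) k} ≤ 3*s+5 := Nat.sInf_le hup
    have h2 : ¬ sInf {k | StarColorable (Extremal.G s) k} < 3*s+5 :=
      fun h => hlow _ h hmem
    omega
end

section
/- If T is a tree with maximum degree Δ, then χ'_s(T) ≤ ⌊3Δ/2⌋. -/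
open SimpleGraph Finset

set_option linter.unusedSectionVars false
set_option linter.unusedVariables false
set_option maxHeartbeats 1000000

namespace StarTreeAux

section Core

lemma downclosed_count {m f c : ℕ} {nn : ℕ → ℕ}
    (hmono : ∀ i j, i ≤ j → j < m → nn j ≤ nn i)
    (hle : ∀ i, i < m → nn i ≤ c)
    (hf : f = ((Finset.range m).filter (fun i => nn i = c)).card) :
    ∀ i, i < m → (i < f ↔ nn i = c) := by
  intro i him
  set S := (Finset.range m).filter (fun i => nn i = c) with hS
  constructor
  · intro hif
    by_contra hne
    -- every element of S is < i
    have hsub : S ⊆ Finset.range i := by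
      intro j hj
      simp only [hS, mem_filter, mem_range] at hj
      rw [mem_range]
      by_contra hji
      push_neg at hji
      have := hmono i j hji hj.1
      rw [hj.2] at this
      exact hne (le_antisymm (hle i him) this)
    have := Finset.card_le_card hsub
    rw [Finset.card_range] at this
    omega
  · intro hic
    have hsub : Finset.range (i + 1) ⊆ S := by
      intro j hj
      rw [mem_range] at hj
      simp only [hS, mem_filter, mem_range]
      refine ⟨by omega, ?_⟩
      have h1 := hmono j i (by omega) him
      rw [hic] at h1
      exact le_antisymm (hle j (by omega)) h1
    have := Finset.card_le_card hsub
    rw [Finset.card_range] at this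
    omega

lemma core (Δ K q : ℕ) (hq : q = Δ / 2) (hK : K = Δ + q)
    (Allow Spw : Finset ℕ) (hA : Allow ⊆ Finset.range K)
    (m : ℕ) (nn : ℕ → ℕ)
    (hnn : ∀ i, i < m → nn i + 1 ≤ Δ)
    (hmono : ∀ i j, i ≤ j → j < m → nn j ≤ nn i)
    (hm : m ≤ Δ)
    (hroot : Spw = ∅ ∨ m + 1 ≤ Δ)
    (hAllow : m ≤ Allow.card)
    (hfresh : Spw = ∅ ∨ q ≤ (Allow \ Spw).card) :
    ∃ (col : ℕ → ℕ) (beat : ℕ → Finset ℕ),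
      (∀ i j, i < m → j < m → i ≠ j → col i ≠ col j) ∧
      (∀ i, i < m → col i ∈ Allow) ∧
      (∀ i j, i < m → j < m → i ≠ j → col j ∈ beat i ∨ col i ∈ beat j) ∧
      (∀ i, i < m → beat i ⊆ (Finset.range m).image col) ∧
      (∀ i, i < m → nn i + (1 + (if col i ∈ Spw then 1 else 0) + (beat i).card) ≤ K) := by
  classical
  set s := m / 2 with hs
  set t := m - s with ht
  set f := ((Finset.range m).filter (fun i => nn i + 1 = Δ)).card with hfdef
  have hfull : ∀ i, i < m → (i < f ↔ nn i + 1 = Δ) := by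
    refine downclosed_count (c := Δ) (fun i j hij hj => ?_) (fun i hi => hnn i hi) ?_
    · exact Nat.add_le_add_right (hmono i j hij hj) 1
    · rw [hfdef]
  set b := f - s with hb
  have hfm : f ≤ m := by
    rw [hfdef]
    calc ((Finset.range m).filter (fun i => nn i + 1 = Δ)).card
        ≤ (Finset.range m).card := Finset.card_filter_le _ _
      _ = m := Finset.card_range m
  set A1 := Allow \ Spw with hA1
  set A2 := Allow ∩ Spw with hA2
  have hbA1 : b ≤ A1.card := by
    by_cases hsp : Spw = ∅
    · rw [hA1, hsp, Finset.sdiff_empty]; omega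
    · have h1 : m + 1 ≤ Δ := hroot.resolve_left hsp
      have h2 : q ≤ A1.card := hfresh.resolve_left hsp
      omega
  set L1 := A1.sort (· ≤ ·) with hL1
  set L2 := A2.sort (· ≤ ·) with hL2
  set L := L1 ++ L2 with hL
  have hL1len : L1.length = A1.card := Finset.length_sort _
  have hL2len : L2.length = A2.card := Finset.length_sort _
  have hLlen : L.length = Allow.card := by
    rw [hL, List.length_append, hL1len, hL2len, hA1, hA2, Finset.card_sdiff_add_card_inter]
  have hLnodup : L.Nodup := by
    rw [hL, List.nodup_append]
    refine ⟨Finset.sort_nodup _ _, Finset.sort_nodup _ _, ?_⟩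
    intro a ha b ha' hab
    subst hab
    rw [hL1, Finset.mem_sort, hA1, Finset.mem_sdiff] at ha
    rw [hL2, Finset.mem_sort, hA2, Finset.mem_inter] at ha'
    exact ha.2 ha'.2
  have hLmem : ∀ a ∈ L, a ∈ Allow := by
    intro a ha
    rw [hL, List.mem_append] at ha
    rcases ha with ha | ha
    · rw [hL1, Finset.mem_sort, hA1, Finset.mem_sdiff] at ha; exact ha.1
    · rw [hL2, Finset.mem_sort, hA2, Finset.mem_inter] at ha; exact ha.1
  set σ : ℕ → ℕ := fun i => if s ≤ i ∧ i < f then i - s else if i < s then i + b else i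
    with hσ
  have hσlt : ∀ i, i < m → σ i < m := by
    intro i hi
    rw [hσ]
    dsimp only
    split_ifs <;> omega
  have hσinj : ∀ i j, i < m → j < m → σ i = σ j → i = j := by
    intro i j hi hj hij
    rw [hσ] at hij
    dsimp only at hij
    split_ifs at hij <;> omega
  set col : ℕ → ℕ := fun i => L.getD (σ i) 0 with hcol
  have hσL : ∀ i, i < m → σ i < L.length := by
    intro i hi
    rw [hLlen]
    exact lt_of_lt_of_le (hσlt i hi) hAllow
  have hcolget : ∀ i (hi : i < m), col i = L[σ i]'(hσL i hi) := by
    intro i hi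
    rw [hcol]
    exact List.getD_eq_getElem L 0 (hσL i hi)
  have hcolinj : ∀ i j, i < m → j < m → i ≠ j → col i ≠ col j := by
    intro i j hi hj hne heq
    rw [hcolget i hi, hcolget j hj] at heq
    rw [hLnodup.getElem_inj_iff] at heq
    exact hne (hσinj i j hi hj heq)
  have hcolmem : ∀ i, i < m → col i ∈ Allow := by
    intro i hi
    rw [hcolget i hi]
    exact hLmem _ (List.getElem_mem _)
  have hcolfresh : ∀ i, s ≤ i → i < f → col i ∉ Spw := by
    intro i hsi hif
    have hi : i < m := lt_of_lt_of_le hif hfm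
    have h1 : σ i = i - s := by rw [hσ]; dsimp only; rw [if_pos ⟨hsi, hif⟩]
    have h2 : σ i < L1.length := by rw [hL1len]; omega
    have : col i = L1.getD (σ i) 0 := by
      rw [hcol, hL]
      exact List.getD_append _ _ _ _ h2
    rw [this, List.getD_eq_getElem _ _ h2]
    have hmem : L1[σ i] ∈ L1 := List.getElem_mem _
    have hnot : ∀ a, a ∈ L1 → a ∉ Spw := by
      intro a ha
      rw [hL1, Finset.mem_sort, hA1, Finset.mem_sdiff] at ha
      exact ha.2
    exact hnot _ hmem
  set hgt : ℕ → ℕ := fun i => if i < s then t - 1 else s with hhgt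
  set beat : ℕ → Finset ℕ := fun i =>
    (Finset.Icc 1 (hgt i)).image (fun k => col ((i + k) % m)) with hbeat
  have hbeatcard : ∀ i, (beat i).card ≤ hgt i := by
    intro i
    rw [hbeat]
    calc ((Finset.Icc 1 (hgt i)).image (fun k => col ((i + k) % m))).card
        ≤ (Finset.Icc 1 (hgt i)).card := Finset.card_image_le
      _ = hgt i := by rw [Nat.card_Icc]; omega
  have hcover : ∀ i j, i < j → j < m → col j ∈ beat i ∨ col i ∈ beat j := by
    intro i j hij hj
    have hi : i < m := lt_trans hij hj
    have hts : t - 1 ≤ s := by omega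
    by_cases he : j - i ≤ hgt i
    · left
      rw [hbeat]
      dsimp only
      rw [Finset.mem_image]
      refine ⟨j - i, ?_, ?_⟩
      · rw [Finset.mem_Icc]; omega
      · congr 1
        rw [show i + (j - i) = j from by omega, Nat.mod_eq_of_lt hj]
    · right
      have hgi : hgt i ≥ t - 1 := by rw [hhgt]; dsimp only; split_ifs <;> omega
      have hjs : ¬ (j < s) := by
        rw [hhgt] at he
        dsimp only at he
        split_ifs at he <;> omega
      have hgj : hgt j = s := by rw [hhgt]; dsimp only; rw [if_neg hjs]
      rw [hbeat]
      dsimp only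
      rw [Finset.mem_image]
      refine ⟨m - (j - i), ?_, ?_⟩
      · rw [Finset.mem_Icc, hgj]
        rw [hhgt] at he
        dsimp only at he
        split_ifs at he <;> omega
      · congr 1
        rw [show j + (m - (j - i)) = m + i from by omega, Nat.add_mod_left, Nat.mod_eq_of_lt hi]
  refine ⟨col, beat, hcolinj, hcolmem, ?_, ?_, ?_⟩
  · intro i j hi hj hne
    rcases lt_or_gt_of_ne hne with h | h
    · exact hcover i j h hj
    · exact (hcover j i h hi).symm
  · intro i hi
    rw [hbeat]
    dsimp only
    intro a ha
    rw [Finset.mem_image] at ha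
    obtain ⟨k, -, hk⟩ := ha
    rw [Finset.mem_image]
    exact ⟨(i + k) % m, Finset.mem_range.mpr (Nat.mod_lt _ (by omega)), hk⟩
  · intro i hi
    have hc := hbeatcard i
    have hn := hnn i hi
    by_cases hbig : s ≤ i ∧ i < f
    · have h0 : col i ∉ Spw := hcolfresh i hbig.1 hbig.2
      rw [if_neg h0]
      have : hgt i = s := by rw [hhgt]; dsimp only; rw [if_neg (by omega)]
      rw [this] at hc
      omega
    · by_cases his : i < s
      · have : hgt i = t - 1 := by rw [hhgt]; dsimp only; rw [if_pos his]
        rw [this] at hc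
        by_cases hsp : Spw = ∅
        · have h0 : col i ∉ Spw := by rw [hsp]; exact Finset.notMem_empty _
          rw [if_neg h0]
          omega
        · have h1 : m + 1 ≤ Δ := hroot.resolve_left hsp
          have : (if col i ∈ Spw then 1 else 0) ≤ 1 := by split_ifs <;> omega
          omega
      · have hif : ¬ i < f := by omega
        have hnf : nn i + 1 ≠ Δ := by
          intro hcontra
          exact hif ((hfull i hi).mpr hcontra)
        have : hgt i = s := by rw [hhgt]; dsimp only; rw [if_neg his]
        rw [this] at hc
        have : (if col i ∈ Spw then 1 else 0) ≤ 1 := by split_ifs <;> omega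
        omega

end Core

variable {V : Type*} {G : SimpleGraph V}

section Rooted

variable [DecidableEq V] (ht : G.IsTree) (r : V)

/-- The unique path from `r` to `v`. -/
noncomputable def pth (v : V) : G.Walk r v := (ht.existsUnique_path r v).exists.choose

lemma pth_isPath (v : V) : (pth ht r v).IsPath := (ht.existsUnique_path r v).exists.choose_spec

lemma pth_unique {v : V} (q : G.Walk r v) (hq : q.IsPath) : q = pth ht r v :=
  (ht.existsUnique_path r v).unique hq (pth_isPath ht r v)

/-- Depth of a vertex. -/
noncomputable def dep (v : V) : ℕ := (pth ht r v).length

lemma dep_r : dep ht r r = 0 := by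
  have : (Walk.nil : G.Walk r r) = pth ht r r := pth_unique ht r _ (Walk.IsPath.nil)
  simp [dep, ← this]

lemma eq_r_of_dep {v : V} (h : dep ht r v = 0) : v = r :=
  (Walk.eq_of_length_eq_zero (p := pth ht r v) h).symm

lemma dep_le_of_mem_support {u v : V} (h : u ∈ (pth ht r v).support) :
    dep ht r u ≤ dep ht r v := by
  have hp : ((pth ht r v).takeUntil u h).IsPath := (pth_isPath ht r v).takeUntil h
  have := pth_unique ht r _ hp
  have hlen := Walk.length_takeUntil_le (pth ht r v) h
  rw [this] at hlen
  exact hlen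

lemma adj_dep {a b : V} (h : G.Adj a b) :
    dep ht r b = dep ht r a + 1 ∨ dep ht r a = dep ht r b + 1 := by
  classical
  by_cases hb : b ∈ (pth ht r a).support
  · right
    have htake : ((pth ht r a).takeUntil b hb).IsPath := (pth_isPath ht r a).takeUntil hb
    have hPb : (pth ht r a).takeUntil b hb = pth ht r b := pth_unique ht r _ htake
    have hdrop : ((pth ht r a).dropUntil b hb).IsPath := (pth_isPath ht r a).dropUntil hb
    have hcons : (Walk.cons h.symm Walk.nil : G.Walk b a).IsPath := by
      simp [Walk.isPath_def, h.ne']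
    have hd := (ht.existsUnique_path b a).unique hdrop hcons
    have hspec := (pth ht r a).take_spec hb
    have hlen := congrArg Walk.length hspec
    rw [Walk.length_append, hd, hPb] at hlen
    simp only [Walk.length_cons, Walk.length_nil] at hlen
    simp only [dep]
    omega
  · left
    have hpath : ((pth ht r a).concat h).IsPath := by
      rw [Walk.isPath_def, Walk.support_concat, List.nodup_append]
      refine ⟨(pth_isPath ht r a).support_nodup, List.nodup_singleton b, ?_⟩
      intro x hx y hy hxy
      rw [List.mem_singleton] at hy
      rw [hxy, hy] at hx
      exact hb hx
    have heq := pth_unique ht r _ hpath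
    have hlen := congrArg Walk.length heq
    rw [Walk.length_concat] at hlen
    simp only [dep]
    omega

lemma exists_parent {v : V} (hv : v ≠ r) : ∃ u, G.Adj u v ∧ dep ht r u + 1 = dep ht r v := by
  have hlen : 0 < dep ht r v := by
    rcases Nat.eq_zero_or_pos (dep ht r v) with h | h
    · exact absurd (eq_r_of_dep ht r h) hv
    · exact h
  have hdd : dep ht r v = (pth ht r v).length := rfl
  set u := (pth ht r v).getVert (dep ht r v - 1) with hu
  have hadj : G.Adj u v := by
    have := (pth ht r v).adj_getVert_succ (i := dep ht r v - 1) (by omega)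
    rw [show dep ht r v - 1 + 1 = dep ht r v from by omega] at this
    rw [hu]
    convert this using 2
    exact ((pth ht r v).getVert_length).symm
  have hmem : u ∈ (pth ht r v).support := by
    rw [Walk.mem_support_iff_exists_getVert]
    exact ⟨dep ht r v - 1, rfl, by omega⟩
  have hle : dep ht r u ≤ dep ht r v := dep_le_of_mem_support ht r hmem
  rcases adj_dep ht r hadj with h | h
  · exact ⟨u, hadj, h.symm⟩
  · omega

/-- Parent function. -/
noncomputable def par (v : V) : V :=
  if h : v = r then v else (exists_parent ht r h).choose

lemma par_spec {v : V} (hv : v ≠ r) :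
    G.Adj (par ht r v) v ∧ dep ht r (par ht r v) + 1 = dep ht r v := by
  rw [par, dif_neg hv]
  exact (exists_parent ht r hv).choose_spec

lemma par_unique {u v : V} (h : G.Adj u v) (hd : dep ht r u + 1 = dep ht r v) :
    par ht r v = u := by
  have hv : v ≠ r := by
    intro hv; subst hv; rw [dep_r] at hd; omega
  obtain ⟨hadj, hdep⟩ := par_spec ht r hv
  set u' := par ht r v
  by_contra hne
  -- both (pth u).concat and (pth u').concat are paths from r to v
  have key : ∀ w : V, G.Adj w v → dep ht r w + 1 = dep ht r v →
      (pth ht r v).edges = (pth ht r w).edges ++ [s(w, v)] := by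
    intro w hw hdw
    have hvmem : v ∉ (pth ht r w).support := by
      intro hmem
      have := dep_le_of_mem_support ht r hmem
      omega
    have hpath : ((pth ht r w).concat hw).IsPath := by
      rw [Walk.isPath_def, Walk.support_concat, List.nodup_append]
      refine ⟨(pth_isPath ht r w).support_nodup, List.nodup_singleton v, ?_⟩
      intro x hx y hy hxy
      rw [List.mem_singleton] at hy
      rw [hxy, hy] at hx
      exact hvmem hx
    have := pth_unique ht r _ hpath
    rw [← this, Walk.edges_concat, List.concat_eq_append]
  have h1 := key u h hd
  have h2 := key u' hadj hdep
  rw [h1] at h2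
  have hlen : (pth ht r u).edges.length = (pth ht r u').edges.length := by
    have e1 : (pth ht r u).edges.length = dep ht r u := Walk.length_edges _
    have e2 : (pth ht r u').edges.length = dep ht r u' := Walk.length_edges _
    omega
  obtain ⟨-, h4⟩ := List.append_inj h2 hlen
  simp only [List.cons.injEq] at h4
  have := h4.1
  rw [Sym2.eq_iff] at this
  rcases this with ⟨h5, -⟩ | ⟨h5, h6⟩
  · exact hne h5.symm
  · exact G.loopless.irrefl v (h6 ▸ hadj)

lemma dep_par_add_one {v : V} (hv : v ≠ r) : dep ht r (par ht r v) + 1 = dep ht r v :=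
  (par_spec ht r hv).2

lemma adj_par {v : V} (hv : v ≠ r) : G.Adj (par ht r v) v := (par_spec ht r hv).1

lemma adj_cases {a b : V} (h : G.Adj a b) :
    (par ht r b = a ∧ dep ht r a + 1 = dep ht r b) ∨
    (par ht r a = b ∧ dep ht r b + 1 = dep ht r a) := by
  rcases adj_dep ht r h with hd | hd
  · exact Or.inl ⟨par_unique ht r h hd.symm, hd.symm⟩
  · exact Or.inr ⟨par_unique ht r h.symm hd.symm, hd.symm⟩

lemma ne_r_of_dep_succ {u v : V} (h : dep ht r v = dep ht r u + 1) : v ≠ r := by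
  intro hv
  subst hv
  rw [dep_r] at h
  omega

section Children

variable [Fintype V] [DecidableRel G.Adj]

/-- The children of a vertex. -/
noncomputable def chl (u : V) : Finset V :=
  (G.neighborFinset u).filter (fun x => dep ht r x = dep ht r u + 1)

lemma mem_chl {u x : V} :
    x ∈ chl ht r u ↔ G.Adj u x ∧ dep ht r x = dep ht r u + 1 := by
  rw [chl, Finset.mem_filter, SimpleGraph.mem_neighborFinset]

lemma par_of_mem_chl {u x : V} (h : x ∈ chl ht r u) : par ht r x = u := by
  rw [mem_chl] at h
  exact par_unique ht r h.1 h.2.symm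

lemma mem_chl_par {v : V} (hv : v ≠ r) : v ∈ chl ht r (par ht r v) := by
  rw [mem_chl]
  exact ⟨adj_par ht r hv, (dep_par_add_one ht r hv).symm⟩

lemma mem_chl_iff_par {u x : V} : x ∈ chl ht r u ↔ x ≠ r ∧ par ht r x = u := by
  constructor
  · intro h
    refine ⟨?_, par_of_mem_chl ht r h⟩
    rw [mem_chl] at h
    exact ne_r_of_dep_succ ht r h.2
  · rintro ⟨hx, hpar⟩
    have := mem_chl_par ht r hx
    rwa [hpar] at this

lemma chl_card_le (u : V) : (chl ht r u).card ≤ G.degree u := by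
  rw [← SimpleGraph.card_neighborFinset_eq_degree]
  exact Finset.card_le_card (Finset.filter_subset _ _)

lemma chl_card_le_sub (u : V) (hu : u ≠ r) : (chl ht r u).card + 1 ≤ G.degree u := by
  rw [← SimpleGraph.card_neighborFinset_eq_degree]
  have hsub : chl ht r u ⊆ (G.neighborFinset u).erase (par ht r u) := by
    intro x hx
    rw [Finset.mem_erase]
    rw [mem_chl] at hx
    refine ⟨?_, by rw [SimpleGraph.mem_neighborFinset]; exact hx.1⟩
    intro hxp
    have := dep_par_add_one ht r hu
    rw [← hxp] at this
    omega
  have h1 := Finset.card_le_card hsub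
  have h2 : ((G.neighborFinset u).erase (par ht r u)).card + 1 = (G.neighborFinset u).card := by
    rw [Finset.card_erase_add_one]
    rw [SimpleGraph.mem_neighborFinset]
    exact (adj_par ht r hu).symm
  omega

include ht in
lemma no_four_cycle {a b c d : V} (hab : G.Adj a b) (hbc : G.Adj b c) (hcd : G.Adj c d)
    (hda : G.Adj d a) (hac : a ≠ c) (hbd : b ≠ d) : False := by
  have h1 : a ≠ b := hab.ne
  have h2 : b ≠ c := hbc.ne
  have h3 : c ≠ d := hcd.ne
  have h4 : d ≠ a := hda.ne
  have hcyc : (Walk.cons hab (Walk.cons hbc (Walk.cons hcd (Walk.cons hda Walk.nil)))).IsCycle := by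
    rw [Walk.isCycle_def]
    refine ⟨?_, by simp, ?_⟩
    · rw [Walk.isTrail_def]
      simp only [Walk.edges_cons, Walk.edges_nil, List.nodup_cons, List.mem_cons,
        List.not_mem_nil, or_false, List.mem_singleton, List.nodup_nil, and_true, Sym2.eq_iff]
      push_neg
      aesop
    · simp only [Walk.support_cons, Walk.support_nil, List.tail_cons, List.nodup_cons,
        List.mem_cons, List.not_mem_nil, or_false, List.mem_singleton, List.nodup_nil, and_true]
      push_neg
      aesop
  exact ht.2 _ hcyc

section Coloring

variable (Δ : ℕ)

/-- Colors appearing at a vertex. -/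
noncomputable def Sv (col : V → ℕ) (u : V) : Finset ℕ :=
  ((chl ht r u).image col) ∪ (if u = r then ∅ else {col u})

/-- Forbidden colors for the children of `x`. -/
noncomputable def Fb (col : V → ℕ) (beat : V → Finset ℕ) (x : V) : Finset ℕ :=
  insert (col x) (beat x) ∪
    (if par ht r x ≠ r ∧ col x ∈ Sv ht r col (par ht r (par ht r x))
      then {col (par ht r x)} else ∅)

/-- The inductive invariant. -/
def Phi (col : V → ℕ) (beat : V → Finset ℕ) (n : ℕ) : Prop :=
  ∀ x, x ≠ r → dep ht r x ≤ n →
    (col x < Δ + Δ / 2) ∧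
    (∀ y, y ≠ r → y ≠ x → par ht r y = par ht r x → col y ≠ col x) ∧
    (par ht r x ≠ r → col x ≠ col (par ht r x)) ∧
    (par ht r x ≠ r → col x ∉ beat (par ht r x)) ∧
    (par ht r x ≠ r → par ht r (par ht r x) ≠ r →
      col (par ht r x) ∈ Sv ht r col (par ht r (par ht r (par ht r x))) →
      col x ≠ col (par ht r (par ht r x))) ∧
    (∀ y, y ≠ r → y ≠ x → par ht r y = par ht r x → (col y ∈ beat x ∨ col x ∈ beat y)) ∧
    (beat x ⊆ Sv ht r col (par ht r x)) ∧
    ((chl ht r x).card + (Fb ht r col beat x).card ≤ Δ + Δ / 2)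

lemma Sv_card_le (hΔ : ∀ v, G.degree v ≤ Δ) (col : V → ℕ) (u : V) :
    (Sv ht r col u).card ≤ Δ := by
  rw [Sv]
  by_cases hu : u = r
  · rw [if_pos hu, Finset.union_empty]
    calc ((chl ht r u).image col).card ≤ (chl ht r u).card := Finset.card_image_le
      _ ≤ G.degree u := chl_card_le ht r u
      _ ≤ Δ := hΔ u
  · rw [if_neg hu]
    calc (((chl ht r u).image col) ∪ {col u}).card
        ≤ ((chl ht r u).image col).card + 1 := by
          refine le_trans (Finset.card_union_le _ _) ?_
          simp
      _ ≤ (chl ht r u).card + 1 := by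
          have := Finset.card_image_le (s := chl ht r u) (f := col)
          omega
      _ ≤ G.degree u := chl_card_le_sub ht r u hu
      _ ≤ Δ := hΔ u

lemma Fb_subset_Sv (col : V → ℕ) (beat : V → Finset ℕ) (x : V) (hx : x ≠ r)
    (hbeat : beat x ⊆ Sv ht r col (par ht r x)) :
    Fb ht r col beat x ⊆ Sv ht r col (par ht r x) := by
  rw [Fb]
  apply Finset.union_subset
  · apply Finset.insert_subset
    · rw [Sv]
      apply Finset.mem_union_left
      exact Finset.mem_image_of_mem col (mem_chl_par ht r hx)
    · exact hbeat
  · split_ifs with hcond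
    · intro a ha
      rw [Finset.mem_singleton] at ha
      subst ha
      rw [Sv]
      apply Finset.mem_union_right
      rw [if_neg hcond.1]
      exact Finset.mem_singleton_self _
    · intro a ha
      exact absurd ha (Finset.notMem_empty a)

lemma exists_local (hΔ : ∀ v, G.degree v ≤ Δ) (n : ℕ) (col : V → ℕ) (beat : V → Finset ℕ)
    (hphi : Phi ht r Δ col beat n) (w : V) (hw : dep ht r w = n) :
    ∃ F : V → ℕ × Finset ℕ,
      (∀ x ∈ chl ht r w, (F x).1 ∈ (if w = r then Finset.range (Δ + Δ / 2)
          else Finset.range (Δ + Δ / 2) \ Fb ht r col beat w)) ∧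
      (∀ x ∈ chl ht r w, ∀ y ∈ chl ht r w, x ≠ y → (F x).1 ≠ (F y).1) ∧
      (∀ x ∈ chl ht r w, ∀ y ∈ chl ht r w, x ≠ y → ((F y).1 ∈ (F x).2 ∨ (F x).1 ∈ (F y).2)) ∧
      (∀ x ∈ chl ht r w, (F x).2 ⊆ (chl ht r w).image (fun y => (F y).1)) ∧
      (∀ x ∈ chl ht r w, (chl ht r x).card +
        (1 + (if (F x).1 ∈ (if w = r then (∅ : Finset ℕ) else Sv ht r col (par ht r w))
          then 1 else 0) + (F x).2.card) ≤ Δ + Δ / 2) := by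
  classical
  set K := Δ + Δ / 2 with hKdef
  set Allow := (if w = r then Finset.range K else Finset.range K \ Fb ht r col beat w)
    with hAdef
  set Spw := (if w = r then (∅ : Finset ℕ) else Sv ht r col (par ht r w)) with hSdef
  set le : V → V → Bool := fun a b => decide ((chl ht r b).card ≤ (chl ht r a).card) with hle
  set LS := (chl ht r w).toList.mergeSort le with hLS
  have hperm : List.Perm LS ((chl ht r w).toList) := List.mergeSort_perm _ _
  have hLSmem : ∀ x, x ∈ LS ↔ x ∈ chl ht r w := by
    intro x
    rw [hperm.mem_iff, Finset.mem_toList]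
  have hLSnodup : LS.Nodup := hperm.nodup_iff.mpr (Finset.nodup_toList _)
  set m := (chl ht r w).card with hm
  have hLSlen : LS.length = m := by rw [hperm.length_eq, Finset.length_toList]
  have hsorted : LS.Pairwise (fun a b => le a b = true) := by
    apply List.pairwise_mergeSort
    · intro a b c hab hbc
      simp only [hle, decide_eq_true_eq] at *
      omega
    · intro a b
      simp only [hle]
      rcases Nat.le_total (chl ht r b).card (chl ht r a).card with h | h
      · simp [h]
      · simp [h]
  set nn : ℕ → ℕ := fun i => (chl ht r (LS.getD i w)).card with hnn
  have hgetmem : ∀ i, i < m → LS.getD i w ∈ chl ht r w := by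
    intro i hi
    have hi' : i < LS.length := by omega
    rw [List.getD_eq_getElem _ _ hi']
    rw [← hLSmem]
    exact List.getElem_mem _
  have hchldne : ∀ x, x ∈ chl ht r w → x ≠ r := by
    intro x hx
    exact (mem_chl_iff_par ht r |>.mp hx).1
  have hcore := core Δ K (Δ / 2) rfl rfl Allow Spw ?_ m nn ?_ ?_ ?_ ?_ ?_ ?_
  · obtain ⟨ccol, cbeat, hinj, hmem, hcover, hsub, hbud⟩ := hcore
    set F : V → ℕ × Finset ℕ := fun x => (ccol (LS.idxOf x), cbeat (LS.idxOf x)) with hF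
    have hidx : ∀ x ∈ chl ht r w, LS.idxOf x < m ∧ LS.getD (LS.idxOf x) w = x := by
      intro x hx
      have hmem' : x ∈ LS := (hLSmem x).mpr hx
      have h1 : LS.idxOf x < LS.length := List.idxOf_lt_length_iff.mpr hmem'
      refine ⟨by omega, ?_⟩
      rw [List.getD_eq_getElem _ _ h1]
      exact List.getElem_idxOf h1
    have hidxinj : ∀ x ∈ chl ht r w, ∀ y ∈ chl ht r w, x ≠ y →
        LS.idxOf x ≠ LS.idxOf y := by
      intro x hx y hy hne heq
      obtain ⟨-, hx2⟩ := hidx x hx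
      obtain ⟨-, hy2⟩ := hidx y hy
      rw [heq] at hx2
      rw [hy2] at hx2
      exact hne hx2.symm
    refine ⟨F, ?_, ?_, ?_, ?_, ?_⟩
    · intro x hx
      exact hmem _ (hidx x hx).1
    · intro x hx y hy hne
      exact hinj _ _ (hidx x hx).1 (hidx y hy).1 (hidxinj x hx y hy hne)
    · intro x hx y hy hne
      exact hcover _ _ (hidx x hx).1 (hidx y hy).1 (hidxinj x hx y hy hne)
    · intro x hx
      intro a ha
      have := hsub _ (hidx x hx).1 ha
      rw [Finset.mem_image] at this
      obtain ⟨i, hi, hic⟩ := this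
      rw [Finset.mem_range] at hi
      rw [Finset.mem_image]
      refine ⟨LS.getD i w, hgetmem i hi, ?_⟩
      rw [hF]
      dsimp only
      have h1 : LS.idxOf (LS.getD i w) = i := by
        have hi' : i < LS.length := by omega
        rw [List.getD_eq_getElem _ _ hi']
        exact hLSnodup.idxOf_getElem _ _
      rw [h1, hic]
    · intro x hx
      have hb := hbud _ (hidx x hx).1
      have h2 : nn (LS.idxOf x) = (chl ht r x).card := by
        rw [hnn]
        dsimp only
        rw [(hidx x hx).2]
      rw [h2] at hb
      exact hb
  -- side goals of core
  · rw [hAdef]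
    split_ifs
    · exact Finset.Subset.refl _
    · exact Finset.sdiff_subset
  · intro i hi
    have hx := hgetmem i hi
    have hxne := hchldne _ hx
    have := chl_card_le_sub ht r (LS.getD i w) hxne
    have := hΔ (LS.getD i w)
    rw [hnn]
    dsimp only
    omega
  · intro i j hij hj
    rcases Nat.lt_or_ge i j with h | h
    · have hi : i < LS.length := by omega
      have hj' : j < LS.length := by omega
      have hp := List.pairwise_iff_getElem.mp hsorted i j hi hj' h
      simp only [hle, decide_eq_true_eq] at hp
      rw [hnn]
      dsimp only
      rw [List.getD_eq_getElem _ _ hi, List.getD_eq_getElem _ _ hj']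
      exact hp
    · have : i = j := by omega
      subst this
      exact le_refl _
  · rw [hm]
    calc (chl ht r w).card ≤ G.degree w := chl_card_le ht r w
      _ ≤ Δ := hΔ w
  · by_cases hwr : w = r
    · left
      rw [hSdef, if_pos hwr]
    · right
      have := chl_card_le_sub ht r w hwr
      have := hΔ w
      omega
  · by_cases hwr : w = r
    · rw [hAdef, if_pos hwr, Finset.card_range]
      have h1 : (chl ht r w).card ≤ G.degree w := chl_card_le ht r w
      have := hΔ w
      omega
    · rw [hAdef, if_neg hwr]
      have h1 := Finset.le_card_sdiff (Fb ht r col beat w) (Finset.range K)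
      rw [Finset.card_range] at h1
      have h2 := (hphi w hwr (by omega)).2.2.2.2.2.2.2
      omega
  · by_cases hwr : w = r
    · left
      rw [hSdef, if_pos hwr]
    · right
      have hphiw := hphi w hwr (by omega)
      have hsub : Fb ht r col beat w ⊆ Sv ht r col (par ht r w) :=
        Fb_subset_Sv ht r col beat w hwr hphiw.2.2.2.2.2.2.1
      have hsup : Finset.range K \ Sv ht r col (par ht r w) ⊆ Allow \ Spw := by
        intro a ha
        rw [Finset.mem_sdiff] at ha
        rw [Finset.mem_sdiff, hAdef, if_neg hwr, hSdef, if_neg hwr, Finset.mem_sdiff]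
        exact ⟨⟨ha.1, fun hc => ha.2 (hsub hc)⟩, ha.2⟩
      have h1 := Finset.card_le_card hsup
      have h2 := Finset.le_card_sdiff (Sv ht r col (par ht r w)) (Finset.range K)
      rw [Finset.card_range] at h2
      have h3 := Sv_card_le ht r Δ hΔ col (par ht r w)
      omega

lemma Sv_eq (col col' : V → ℕ) (u : V) (h1 : u ≠ r → col' u = col u)
    (hch : ∀ x ∈ chl ht r u, col' x = col x) : Sv ht r col' u = Sv ht r col u := by
  rw [Sv, Sv]
  congr 1
  · exact Finset.image_congr hch
  · split_ifs with hu
    · rfl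
    · rw [h1 hu]

lemma phi_zero : Phi ht r Δ (fun _ => 0) (fun _ => ∅) 0 := by
  intro x hx hdep
  exact absurd (eq_r_of_dep ht r (Nat.le_zero.mp hdep)) hx

lemma phi_step (hΔ : ∀ v, G.degree v ≤ Δ) (n : ℕ) (col : V → ℕ) (beat : V → Finset ℕ)
    (hphi : Phi ht r Δ col beat n) :
    ∃ col' beat', Phi ht r Δ col' beat' (n + 1) := by
  classical
  set K := Δ + Δ / 2 with hKdef
  have hex : ∀ w : V, ∃ F : V → ℕ × Finset ℕ, dep ht r w = n →
      ((∀ x ∈ chl ht r w, (F x).1 ∈ (if w = r then Finset.range K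
          else Finset.range K \ Fb ht r col beat w)) ∧
      (∀ x ∈ chl ht r w, ∀ y ∈ chl ht r w, x ≠ y → (F x).1 ≠ (F y).1) ∧
      (∀ x ∈ chl ht r w, ∀ y ∈ chl ht r w, x ≠ y → ((F y).1 ∈ (F x).2 ∨ (F x).1 ∈ (F y).2)) ∧
      (∀ x ∈ chl ht r w, (F x).2 ⊆ (chl ht r w).image (fun y => (F y).1)) ∧
      (∀ x ∈ chl ht r w, (chl ht r x).card +
        (1 + (if (F x).1 ∈ (if w = r then (∅ : Finset ℕ) else Sv ht r col (par ht r w))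
          then 1 else 0) + (F x).2.card) ≤ K)) := by
    intro w
    by_cases hw : dep ht r w = n
    · obtain ⟨F, hF1, hF2, hF3, hF4, hF5⟩ := exists_local ht r Δ hΔ n col beat hphi w hw
      exact ⟨F, fun _ => ⟨hF1, hF2, hF3, hF4, hF5⟩⟩
    · exact ⟨fun _ => (0, ∅), fun h => absurd h hw⟩
  choose CB hCB using hex
  set col' : V → ℕ := fun x => if dep ht r x = n + 1 then (CB (par ht r x) x).1 else col x
    with hcol'
  set beat' : V → Finset ℕ := fun x => if dep ht r x = n + 1 then (CB (par ht r x) x).2 else beat x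
    with hbeat'
  have hceq : ∀ y, dep ht r y ≤ n → col' y = col y := by
    intro y hy
    rw [hcol']
    dsimp only
    rw [if_neg (by omega)]
  have hbeq : ∀ y, dep ht r y ≤ n → beat' y = beat y := by
    intro y hy
    rw [hbeat']
    dsimp only
    rw [if_neg (by omega)]
  have hSveq : ∀ u, dep ht r u + 1 ≤ n → Sv ht r col' u = Sv ht r col u := by
    intro u hu
    apply Sv_eq
    · intro _
      exact hceq u (by omega)
    · intro x hxm
      rw [mem_chl] at hxm
      exact hceq x (by omega)
  refine ⟨col', beat', ?_⟩
  intro x hx hdep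
  by_cases hdx : dep ht r x ≤ n
  · -- old vertices : transfer
    have hxpos : 1 ≤ dep ht r x := by
      rcases Nat.eq_zero_or_pos (dep ht r x) with h | h
      · exact absurd (eq_r_of_dep ht r h) hx
      · exact h
    have hdpar : dep ht r (par ht r x) + 1 = dep ht r x := dep_par_add_one ht r hx
    obtain ⟨ha, hb, hc, hd, he, hf, hg, hh⟩ := hphi x hx hdx
    have hcx : col' x = col x := hceq x hdx
    have hbx : beat' x = beat x := hbeq x hdx
    have hcpar : col' (par ht r x) = col (par ht r x) := hceq _ (by omega)
    refine ⟨?_, ?_, ?_, ?_, ?_, ?_, ?_, ?_⟩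
    · rw [hcx]; exact ha
    · intro y hy hyx hpar
      have hdy : dep ht r y ≤ n := by
        have h1 := dep_par_add_one ht r hy
        rw [hpar] at h1
        omega
      rw [hcx, hceq y hdy]
      exact hb y hy hyx hpar
    · intro hpx
      rw [hcx, hcpar]
      exact hc hpx
    · intro hpx
      rw [hcx, hbeq _ (by omega)]
      exact hd hpx
    · intro hpx hppx hmem
      have hdppx : dep ht r (par ht r (par ht r x)) + 1 = dep ht r (par ht r x) :=
        dep_par_add_one ht r hpx
      have hdpppx : dep ht r (par ht r (par ht r (par ht r x))) + 1 =
          dep ht r (par ht r (par ht r x)) := dep_par_add_one ht r hppx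
      rw [hcx, hceq _ (by omega)]
      apply he hpx hppx
      rw [← hcpar, ← hSveq _ (by omega)]
      exact hmem
    · intro y hy hyx hpar
      have hdy : dep ht r y ≤ n := by
        have h1 := dep_par_add_one ht r hy
        rw [hpar] at h1
        omega
      rw [hcx, hceq y hdy, hbx, hbeq y hdy]
      exact hf y hy hyx hpar
    · rw [hbx, hSveq _ (by omega)]
      exact hg
    · have hFbeq : Fb ht r col' beat' x = Fb ht r col beat x := by
        rw [Fb, Fb, hcx, hbx]
        congr 1
        by_cases hpx : par ht r x = r
        · rw [if_neg (by simp [hpx]), if_neg (by simp [hpx])]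
        · have hdppx : dep ht r (par ht r (par ht r x)) + 1 = dep ht r (par ht r x) :=
            dep_par_add_one ht r hpx
          rw [hSveq _ (by omega), hcpar]
      rw [hFbeq]
      exact hh
  · -- new vertices
    have hdx1 : dep ht r x = n + 1 := by omega
    have hdw : dep ht r (par ht r x) = n := by
      have := dep_par_add_one ht r hx
      omega
    have hxchl : x ∈ chl ht r (par ht r x) := mem_chl_par ht r hx
    obtain ⟨hF1, hF2, hF3, hF4, hF5⟩ := hCB (par ht r x) hdw
    have hcx : col' x = (CB (par ht r x) x).1 := by
      rw [hcol']
      dsimp only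
      rw [if_pos hdx1]
    have hbx : beat' x = (CB (par ht r x) x).2 := by
      rw [hbeat']
      dsimp only
      rw [if_pos hdx1]
    have hsibcol : ∀ y, y ≠ r → par ht r y = par ht r x → col' y = (CB (par ht r x) y).1 := by
      intro y hy hpy
      have hdy : dep ht r y = n + 1 := by
        have := dep_par_add_one ht r hy
        rw [hpy] at this
        omega
      rw [hcol']
      dsimp only
      rw [if_pos hdy, hpy]
    have hsibbeat : ∀ y, y ≠ r → par ht r y = par ht r x → beat' y = (CB (par ht r x) y).2 := by
      intro y hy hpy
      have hdy : dep ht r y = n + 1 := by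
        have := dep_par_add_one ht r hy
        rw [hpy] at this
        omega
      rw [hbeat']
      dsimp only
      rw [if_pos hdy, hpy]
    have hmemA := hF1 x hxchl
    refine ⟨?_, ?_, ?_, ?_, ?_, ?_, ?_, ?_⟩
    · rw [hcx]
      by_cases hwr : par ht r x = r
      · rw [if_pos hwr] at hmemA
        rwa [Finset.mem_range] at hmemA
      · rw [if_neg hwr, Finset.mem_sdiff, Finset.mem_range] at hmemA
        exact hmemA.1
    · intro y hy hyx hpar
      have hychl : y ∈ chl ht r (par ht r x) := (mem_chl_iff_par ht r).mpr ⟨hy, hpar⟩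
      rw [hcx, hsibcol y hy hpar]
      exact hF2 y hychl x hxchl (fun h => hyx h)
    · intro hwr
      rw [if_neg hwr, Finset.mem_sdiff] at hmemA
      rw [hcx, hceq (par ht r x) (by omega)]
      intro hcontra
      apply hmemA.2
      rw [Fb, ← hcontra]
      apply Finset.mem_union_left
      exact Finset.mem_insert_self _ _
    · intro hwr
      rw [if_neg hwr, Finset.mem_sdiff] at hmemA
      rw [hcx, hbeq (par ht r x) (by omega)]
      intro hcontra
      apply hmemA.2
      rw [Fb]
      apply Finset.mem_union_left
      exact Finset.mem_insert_of_mem hcontra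
    · intro hwr hppx hmem
      rw [if_neg hwr, Finset.mem_sdiff] at hmemA
      have hdpw : dep ht r (par ht r (par ht r x)) + 1 = dep ht r (par ht r x) :=
        dep_par_add_one ht r hwr
      have hdppw : dep ht r (par ht r (par ht r (par ht r x))) + 1 =
          dep ht r (par ht r (par ht r x)) := dep_par_add_one ht r hppx
      rw [hcx, hceq _ (by omega)]
      intro hcontra
      apply hmemA.2
      rw [Fb, if_pos]
      · apply Finset.mem_union_right
        rw [← hcontra, ← hcx]
        exact Finset.mem_singleton_self _
      · refine ⟨hppx, ?_⟩
        rw [← hceq (par ht r x) (by omega), ← hSveq _ (by omega)]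
        exact hmem
    · intro y hy hyx hpar
      have hychl : y ∈ chl ht r (par ht r x) := (mem_chl_iff_par ht r).mpr ⟨hy, hpar⟩
      rw [hcx, hbx, hsibcol y hy hpar, hsibbeat y hy hpar]
      exact hF3 x hxchl y hychl (fun h => hyx h.symm)
    · rw [hbx]
      intro a ha
      have := hF4 x hxchl ha
      rw [Finset.mem_image] at this
      obtain ⟨y, hy, hyc⟩ := this
      rw [Sv]
      apply Finset.mem_union_left
      rw [Finset.mem_image]
      refine ⟨y, hy, ?_⟩
      obtain ⟨hyne, hypar⟩ := (mem_chl_iff_par ht r).mp hy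
      rw [hsibcol y hyne hypar, hyc]
    · have hbud := hF5 x hxchl
      have hcard : (Fb ht r col' beat' x).card ≤
          1 + (if (CB (par ht r x) x).1 ∈
              (if par ht r x = r then (∅ : Finset ℕ) else Sv ht r col (par ht r (par ht r x)))
            then 1 else 0) + (CB (par ht r x) x).2.card := by
        rw [Fb, hcx, hbx]
        refine le_trans (Finset.card_union_le _ _) ?_
        have h1 : (insert (CB (par ht r x) x).1 (CB (par ht r x) x).2).card ≤
            1 + (CB (par ht r x) x).2.card := by
          have := Finset.card_insert_le (CB (par ht r x) x).1 (CB (par ht r x) x).2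
          omega
        have h2 : (if par ht r x ≠ r ∧
            (CB (par ht r x) x).1 ∈ Sv ht r col' (par ht r (par ht r x))
              then ({col' (par ht r x)} : Finset ℕ) else ∅).card ≤
            (if (CB (par ht r x) x).1 ∈
              (if par ht r x = r then (∅ : Finset ℕ) else Sv ht r col (par ht r (par ht r x)))
              then 1 else 0) := by
          by_cases hwr : par ht r x = r
          · rw [if_pos hwr]
            rw [if_neg]
            · simp
            · push_neg
              intro hcontra
              exact absurd hwr hcontra
          · have hdpw : dep ht r (par ht r (par ht r x)) + 1 = dep ht r (par ht r x) :=
              dep_par_add_one ht r hwr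
            rw [if_neg hwr]
            have hSv : Sv ht r col' (par ht r (par ht r x)) =
                Sv ht r col (par ht r (par ht r x)) := hSveq _ (by omega)
            rw [hSv]
            by_cases hcond : (CB (par ht r x) x).1 ∈ Sv ht r col (par ht r (par ht r x))
            · rw [if_pos ⟨hwr, hcond⟩, if_pos hcond]
              simp
            · rw [if_neg (fun h => hcond h.2), if_neg hcond]
              simp
        omega
      omega

lemma phi_exists (hΔ : ∀ v, G.degree v ≤ Δ) (n : ℕ) :
    ∃ col beat, Phi ht r Δ col beat n := by
  induction n with
  | zero => exact ⟨_, _, phi_zero ht r Δ⟩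
  | succ n ih =>
    obtain ⟨col, beat, h⟩ := ih
    exact phi_step ht r Δ hΔ n col beat h

lemma dep_le_card [Fintype V] : ∀ v, dep ht r v ≤ Fintype.card V := by
  intro v
  have := (pth_isPath ht r v).length_lt
  rw [dep]
  omega

end Coloring

end Children

end Rooted

section Final

variable [Fintype V] [DecidableEq V] [DecidableRel G.Adj]

lemma star_colorable_of_tree (ht : G.IsTree) (Δ : ℕ) (hΔ : ∀ v, G.degree v ≤ Δ) :
    StarColorable G (Δ + Δ / 2) := by
  classical
  obtain ⟨r⟩ := ht.isConnected.nonempty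
  obtain ⟨col, beat, hphi⟩ := phi_exists ht r Δ hΔ (Fintype.card V)
  have hP := fun x hx => hphi x hx (dep_le_card ht r x)
  set f : V → V → ℕ := fun a b => if dep ht r a < dep ht r b then col b
    else if dep ht r b < dep ht r a then col a else 0 with hf
  have hsymm : ∀ a b, f a b = f b a := by
    intro a b
    rw [hf]
    dsimp only
    rcases lt_trichotomy (dep ht r a) (dep ht r b) with h | h | h
    · rw [if_pos h, if_neg (by omega), if_pos h]
    · rw [if_neg (by omega), if_neg (by omega), if_neg (by omega), if_neg (by omega)]
    · rw [if_neg (by omega), if_pos h, if_pos h]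
  set c : Sym2 V → ℕ := Sym2.lift ⟨f, hsymm⟩ with hc
  have hceval : ∀ a b : V, dep ht r a + 1 = dep ht r b → c s(a, b) = col b := by
    intro a b h
    rw [hc, Sym2.lift_mk]
    show (if dep ht r a < dep ht r b then col b else
      if dep ht r b < dep ht r a then col a else 0) = col b
    rw [if_pos (by omega)]
  have hcevalA : ∀ a b : V, dep ht r b + 1 = dep ht r a → c s(a, b) = col a := by
    intro a b h
    rw [hc, Sym2.lift_mk]
    show (if dep ht r a < dep ht r b then col b else
      if dep ht r b < dep ht r a then col a else 0) = col a
    rw [if_neg (by omega), if_pos (by omega)]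
  have hdesc : ∀ {a b d : V}, G.Adj a b → G.Adj b d → a ≠ d →
      dep ht r a + 1 = dep ht r b → dep ht r b + 1 = dep ht r d := by
    intro a b d hab hbd had hd
    rcases adj_cases ht r hbd with ⟨hp, hd'⟩ | ⟨hp, hd'⟩
    · exact hd'
    · have hpa : par ht r b = a := par_unique ht r hab hd
      exact absurd (hpa.symm.trans hp) had
  refine ⟨c, ?_, ?_, ?_⟩
  · -- bound
    intro u v h
    rcases adj_cases ht r h with ⟨hp, hd⟩ | ⟨hp, hd⟩
    · rw [hceval u v hd]
      exact (hP v (ne_r_of_dep_succ ht r hd.symm)).1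
    · rw [hcevalA u v hd]
      exact (hP u (ne_r_of_dep_succ ht r hd.symm)).1
  · -- proper
    intro u v w huv huw hvw
    rcases adj_cases ht r huv with ⟨hpv, hdv⟩ | ⟨hpv, hdv⟩
    · rcases adj_cases ht r huw with ⟨hpw, hdw⟩ | ⟨hpw, hdw⟩
      · -- both children of u
        rw [hceval u v hdv, hceval u w hdw]
        have hnv : v ≠ r := ne_r_of_dep_succ ht r hdv.symm
        have hnw : w ≠ r := ne_r_of_dep_succ ht r hdw.symm
        exact ((hP v hnv).2.1 w hnw (fun h => hvw h.symm) (hpw.trans hpv.symm)).symm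
      · -- v child of u, u child of w
        rw [hceval u v hdv, hcevalA u w hdw]
        have hnv : v ≠ r := ne_r_of_dep_succ ht r hdv.symm
        have hnu : u ≠ r := ne_r_of_dep_succ ht r hdw.symm
        have := (hP v hnv).2.2.1
        rw [hpv] at this
        exact this hnu
    · rcases adj_cases ht r huw with ⟨hpw, hdw⟩ | ⟨hpw, hdw⟩
      · -- u child of v, w child of u
        rw [hcevalA u v hdv, hceval u w hdw]
        have hnw : w ≠ r := ne_r_of_dep_succ ht r hdw.symm
        have hnu : u ≠ r := ne_r_of_dep_succ ht r hdv.symm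
        have := (hP w hnw).2.2.1
        rw [hpw] at this
        exact fun hcontra => (this hnu) hcontra.symm
      · -- u child of both v and w : v = w
        exact absurd (hpv.symm.trans hpw) hvw
  · -- star property
    intro v0 v1 v2 v3 v4 h01 h12 h23 h34 ne01 ne02 ne03 ne12 ne13 ne23 ne41 ne42 ne43
    have ne04 : v0 ≠ v4 := by
      intro h
      have h30 : G.Adj v3 v0 := by rw [h]; exact h34
      exact no_four_cycle ht h01 h12 h23 h30 ne02 ne13
    rintro ⟨e1, e2⟩
    rcases adj_cases ht r h01 with ⟨p1, d1⟩ | ⟨p0, d0⟩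
    · -- v1 child of v0 : fully descending (case A)
      have d2 : dep ht r v1 + 1 = dep ht r v2 := hdesc h01 h12 ne02 d1
      have d3 : dep ht r v2 + 1 = dep ht r v3 := hdesc h12 h23 ne13 d2
      have d4 : dep ht r v3 + 1 = dep ht r v4 := hdesc h23 h34 (fun h => ne42 h.symm) d3
      have p2 : par ht r v2 = v1 := par_unique ht r h12 d2
      have p3 : par ht r v3 = v2 := par_unique ht r h23 d3
      have p4 : par ht r v4 = v3 := par_unique ht r h34 d4
      have n1 : v1 ≠ r := ne_r_of_dep_succ ht r d1.symm
      have n2 : v2 ≠ r := ne_r_of_dep_succ ht r d2.symm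
      have n3 : v3 ≠ r := ne_r_of_dep_succ ht r d3.symm
      have n4 : v4 ≠ r := ne_r_of_dep_succ ht r d4.symm
      rw [hceval v0 v1 d1, hceval v2 v3 d3] at e1
      rw [hceval v1 v2 d2, hceval v3 v4 d4] at e2
      have hA := (hP v4 n4).2.2.2.2.1
      rw [p4, p3, p2] at hA
      apply hA n3 n2 ?_ e2.symm
      rw [← e1, Sv, if_neg n1]
      exact Finset.mem_union_right _ (Finset.mem_singleton_self _)
    · -- v0 child of v1
      rcases adj_cases ht r h12 with ⟨p2, d2⟩ | ⟨p1, d1⟩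
      · -- v2 child of v1 (case B)
        have d3 : dep ht r v2 + 1 = dep ht r v3 := hdesc h12 h23 ne13 d2
        have d4 : dep ht r v3 + 1 = dep ht r v4 := hdesc h23 h34 (fun h => ne42 h.symm) d3
        have p3 : par ht r v3 = v2 := par_unique ht r h23 d3
        have p4 : par ht r v4 = v3 := par_unique ht r h34 d4
        have n0 : v0 ≠ r := ne_r_of_dep_succ ht r d0.symm
        have n2 : v2 ≠ r := ne_r_of_dep_succ ht r d2.symm
        have n3 : v3 ≠ r := ne_r_of_dep_succ ht r d3.symm
        have n4 : v4 ≠ r := ne_r_of_dep_succ ht r d4.symm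
        rw [hcevalA v0 v1 d0, hceval v2 v3 d3] at e1
        rw [hceval v1 v2 d2, hceval v3 v4 d4] at e2
        have hA := (hP v4 n4).2.2.2.2.1
        rw [p4, p3, p2] at hA
        apply hA n3 n2 ?_ e2.symm
        rw [← e1, Sv]
        apply Finset.mem_union_left
        have hm0 := mem_chl_par ht r n0
        rw [p0] at hm0
        exact Finset.mem_image_of_mem col hm0
      · -- v1 child of v2 (cases C and reversed)
        rcases adj_cases ht r h23 with ⟨p3, d3⟩ | ⟨p2, d2⟩
        · -- v3 child of v2 (case C)
          have d4 : dep ht r v3 + 1 = dep ht r v4 := by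
            rcases adj_cases ht r h34 with ⟨hp, hd⟩ | ⟨hp, hd⟩
            · exact hd
            · rw [p3] at hp
              exact absurd hp.symm ne42
          have p4 : par ht r v4 = v3 := par_unique ht r h34 d4
          have n0 : v0 ≠ r := ne_r_of_dep_succ ht r d0.symm
          have n1 : v1 ≠ r := ne_r_of_dep_succ ht r d1.symm
          have n3 : v3 ≠ r := ne_r_of_dep_succ ht r d3.symm
          have n4 : v4 ≠ r := ne_r_of_dep_succ ht r d4.symm
          rw [hcevalA v0 v1 d0, hceval v2 v3 d3] at e1
          rw [hcevalA v1 v2 d1, hceval v3 v4 d4] at e2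
          have hcov := (hP v1 n1).2.2.2.2.2.1 v3 n3 (fun h => ne13 h.symm) (p3.trans p1.symm)
          rcases hcov with h | h
          · have h0 := (hP v0 n0).2.2.2.1
            rw [p0] at h0
            exact (h0 n1) (e1 ▸ h)
          · have h4 := (hP v4 n4).2.2.2.1
            rw [p4] at h4
            exact (h4 n3) (e2.symm ▸ h)
        · -- v2 child of v3
          rcases adj_cases ht r h34 with ⟨p3, d3⟩ | ⟨p3, d3⟩
          · -- v3 child of v4?? no : par v4 = v3 means v4 child
            -- here: par ht r v4 = v3, dep v3 + 1 = dep v4 : v4 child of v3 (reversed case B)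
            have n0 : v0 ≠ r := ne_r_of_dep_succ ht r d0.symm
            have n1 : v1 ≠ r := ne_r_of_dep_succ ht r d1.symm
            have n2 : v2 ≠ r := ne_r_of_dep_succ ht r d2.symm
            have n4 : v4 ≠ r := ne_r_of_dep_succ ht r d3.symm
            rw [hcevalA v0 v1 d0, hcevalA v2 v3 d2] at e1
            rw [hcevalA v1 v2 d1, hceval v3 v4 d3] at e2
            have hA := (hP v0 n0).2.2.2.2.1
            rw [p0, p1, p2] at hA
            apply hA n1 n2 ?_ e1
            rw [e2, Sv]
            apply Finset.mem_union_left
            have hm4 := mem_chl_par ht r n4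
            rw [p3] at hm4
            exact Finset.mem_image_of_mem col hm4
          · -- v3 child of v4 : fully ascending (reversed case A)
            have n0 : v0 ≠ r := ne_r_of_dep_succ ht r d0.symm
            have n1 : v1 ≠ r := ne_r_of_dep_succ ht r d1.symm
            have n2 : v2 ≠ r := ne_r_of_dep_succ ht r d2.symm
            have n3 : v3 ≠ r := ne_r_of_dep_succ ht r d3.symm
            rw [hcevalA v0 v1 d0, hcevalA v2 v3 d2] at e1
            rw [hcevalA v1 v2 d1, hcevalA v3 v4 d3] at e2
            have hA := (hP v0 n0).2.2.2.2.1
            rw [p0, p1, p2] at hA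
            apply hA n1 n2 ?_ e1
            rw [e2, Sv, if_neg n3]
            exact Finset.mem_union_right _ (Finset.mem_singleton_self _)

end Final

end StarTreeAux


/-- If `T` is a tree with maximum degree `Δ`, then `χ'ₛ(T) ≤ ⌊3Δ/2⌋`. -/
theorem starChromaticIndex_tree_le {V : Type*} [Fintype V] (G : SimpleGraph V)
    [DecidableRel G.Adj] (Δ : ℕ) (hΔ : ∀ v : V, G.degree v ≤ Δ)
    (htree : G.IsTree) :
    starChromaticIndex G ≤ 3 * Δ / 2 := by
  classical
  have h : StarColorable G (Δ + Δ / 2) := StarTreeAux.star_colorable_of_tree htree Δ hΔ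
  have hle : starChromaticIndex G ≤ Δ + Δ / 2 := Nat.sInf_le h
  have : Δ + Δ / 2 ≤ 3 * Δ / 2 := by omega
  omega
end
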